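/- arXiv:1105.5612 — 6 statements merged into one kernel-verified Lean document; each statement's English description precedes it below -/
import Mathlib

section
/- If f : ℝⁿ → ℝ is a polynomial function that does not vanish identically, then its zero set {x ∈ ℝⁿ : f(x) = 0} has Hausdorff dimension at most n − 1. -/
open scoped ENNReal

/-- A real-valued function on a real vector space is a *polynomial function* if it lies in the
`ℝ`-subalgebra of functions generated by the linear functionals. -/
def IsPolyFun {W : Type*} [AddCommGroup W] [Module ℝ W] (f : W → ℝ) : Prop :=
  f ∈ Algebra.adjoin ℝ {g : W → ℝ | IsLinearMap ℝ g}

section Aux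

open MvPolynomial Finsupp Set Filter Topology

lemma coeff_pderiv_aux {n : ℕ} (p : MvPolynomial (Fin n) ℝ) (i : Fin n) (m : Fin n →₀ ℕ) :
    coeff m (pderiv i p) = coeff (m + Finsupp.single i 1) p * ((m i : ℝ) + 1) := by
  conv_lhs => rw [p.as_sum, map_sum]
  simp only [pderiv_monomial, MvPolynomial.coeff_sum, coeff_monomial]
  rw [Finset.sum_eq_single (m + Finsupp.single i 1)]
  · rw [if_pos (add_tsub_cancel_right _ _)]
    simp [Finsupp.single_apply]
  · intro b _ hbne
    split_ifs with hb
    · have hbi : b i = 0 := by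
        by_contra hbi
        refine hbne ?_
        have : b - Finsupp.single i 1 + Finsupp.single i 1 = b :=
          tsub_add_cancel_of_le (Finsupp.single_le_iff.2 (Nat.one_le_iff_ne_zero.2 hbi))
        rw [← hb, this]
      simp [hbi]
    · rfl
  · intro hb
    rw [MvPolynomial.notMem_support_iff.1 hb]
    simp

lemma totalDegree_pderiv_lt' {n : ℕ} {p : MvPolynomial (Fin n) ℝ}
    (hp : p.totalDegree ≠ 0) (i : Fin n) :
    (pderiv i p).totalDegree < p.totalDegree := by
  rcases eq_or_ne (pderiv i p) 0 with h | h
  · rw [h, totalDegree_zero]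
    exact Nat.pos_of_ne_zero hp
  · rw [totalDegree]
    refine Finset.sup_lt_iff (Nat.pos_of_ne_zero hp) |>.2 fun m hm => ?_
    have hc : coeff (m + Finsupp.single i 1) p ≠ 0 := by
      intro h0
      have := coeff_pderiv_aux p i m
      rw [h0, zero_mul] at this
      exact MvPolynomial.mem_support_iff.1 hm this
    have hle : (m + Finsupp.single i 1).sum (fun _ e => e) ≤ p.totalDegree :=
      le_totalDegree (MvPolynomial.mem_support_iff.2 hc)
    have hsum : (m + Finsupp.single i 1).sum (fun _ e => e)
        = m.sum (fun _ e => e) + 1 := by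
      rw [Finsupp.sum_add_index' (fun _ => rfl) (fun _ _ _ => rfl)]
      simp
    omega

lemma exists_pderiv_ne_zero' {n : ℕ} {p : MvPolynomial (Fin n) ℝ}
    (hp : p.totalDegree ≠ 0) : ∃ i, pderiv i p ≠ 0 := by
  have hp0 : p ≠ 0 := by
    intro h; rw [h, totalDegree_zero] at hp; exact hp rfl
  obtain ⟨m, hm, hmeq⟩ := p.support.exists_mem_eq_sup
    (MvPolynomial.support_nonempty.mpr hp0) (fun s => s.sum fun _ e => e)
  have hmne : ∃ i, m i ≠ 0 := by
    by_contra h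
    push_neg at h
    have : m = 0 := Finsupp.ext fun i => h i
    rw [totalDegree, hmeq, this] at hp
    simp at hp
  obtain ⟨i, hi⟩ := hmne
  refine ⟨i, ?_⟩
  have h1 : Finsupp.single i 1 ≤ m := Finsupp.single_le_iff.2 (Nat.one_le_iff_ne_zero.2 hi)
  have key := coeff_pderiv_aux p i (m - Finsupp.single i 1)
  rw [tsub_add_cancel_of_le h1] at key
  intro h0
  rw [h0, coeff_zero] at key
  rcases (mul_eq_zero.1 key.symm) with h | h
  · exact MvPolynomial.mem_support_iff.1 hm h
  · have hpos : (0:ℝ) < ((((m - Finsupp.single i 1) : Fin n →₀ ℕ) i : ℕ) : ℝ) + 1 := by positivity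
    exact hpos.ne' h

lemma eq_C_of_totalDegree_eq_zero' {n : ℕ} {p : MvPolynomial (Fin n) ℝ}
    (hp : p.totalDegree = 0) : p = C (coeff 0 p) := by
  ext m
  rcases eq_or_ne m 0 with rfl | hm
  · simp
  · rw [coeff_C, if_neg (Ne.symm hm)]
    by_contra h
    have hmem : m ∈ p.support := MvPolynomial.mem_support_iff.2 h
    have := (totalDegree_eq_zero_iff (Fin n) p).1 hp m hmem
    exact hm (Finsupp.ext fun i => this i)

lemma contDiff_evalE {n : ℕ} (p : MvPolynomial (Fin n) ℝ) :
    ContDiff ℝ ⊤ (fun x : EuclideanSpace ℝ (Fin n) => eval (fun i => x i) p) := by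
  induction p using MvPolynomial.induction_on with
  | C a => simpa using contDiff_const (c := a)
  | add p q hp hq => simpa using hp.add hq
  | mul_X p j hp =>
    have : (fun x : EuclideanSpace ℝ (Fin n) => eval (fun i => x i) (p * X j))
        = fun x => (eval (fun i => x i) p) * (EuclideanSpace.proj j) x := by
      funext x
      simp [EuclideanSpace.proj]
    rw [this]
    exact hp.mul (EuclideanSpace.proj (𝕜 := ℝ) j).contDiff

lemma hasFDerivAt_evalE {n : ℕ} (p : MvPolynomial (Fin n) ℝ) (x : EuclideanSpace ℝ (Fin n)) :
    HasFDerivAt (fun y : EuclideanSpace ℝ (Fin n) => eval (fun i => y i) p)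
      (∑ i, eval (fun j => x j) (pderiv i p) •
        (EuclideanSpace.proj i : EuclideanSpace ℝ (Fin n) →L[ℝ] ℝ)) x := by
  induction p using MvPolynomial.induction_on with
  | C a =>
    have : (fun y : EuclideanSpace ℝ (Fin n) => eval (fun i => y i) (C a)) = fun _ => a := by
      funext y; simp
    rw [this]
    have h0 : (∑ i, eval (fun j => x j) (pderiv i (C a : MvPolynomial (Fin n) ℝ)) •
        (EuclideanSpace.proj i : EuclideanSpace ℝ (Fin n) →L[ℝ] ℝ)) = 0 := by
      simp [pderiv_C]
    rw [h0]
    exact hasFDerivAt_const a x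
  | add p q hp hq =>
    have := hp.add hq
    convert this using 1 <;> try rfl
    · funext y; simp
    · simp only [map_add]
      rw [← Finset.sum_add_distrib]
      congr 1
      funext i
      rw [add_smul]
  | mul_X p j hp =>
    have hproj : HasFDerivAt (fun y : EuclideanSpace ℝ (Fin n) => (EuclideanSpace.proj j) y)
        (EuclideanSpace.proj j : EuclideanSpace ℝ (Fin n) →L[ℝ] ℝ) x :=
      (EuclideanSpace.proj (𝕜 := ℝ) j).hasFDerivAt
    have hm := hp.mul hproj
    convert hm using 1 <;> try rfl
    · funext y
      simp [EuclideanSpace.proj]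
    · ext y
      classical
      simp only [ContinuousLinearMap.sum_apply, ContinuousLinearMap.smul_apply,
        ContinuousLinearMap.add_apply, ContinuousLinearMap.coe_smul', Pi.smul_apply,
        smul_eq_mul, map_mul, pderiv_mul]
      have hX : ∀ i : Fin n, eval (fun j' => x j') (pderiv i (X j : MvPolynomial (Fin n) ℝ))
          = if i = j then 1 else 0 := by
        intro i
        rcases eq_or_ne i j with rfl | hij
        · simp [pderiv_X_self]
        · simp [pderiv_X_of_ne (Ne.symm hij), hij]
      simp only [map_add, map_mul, eval_X, hX, mul_ite, mul_one, mul_zero, add_mul, ite_mul,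
        zero_mul, Finset.sum_add_distrib, Finset.sum_ite_eq', Finset.mem_univ, if_true]
      rw [Finset.mul_sum, add_comm]
      congr 1
      refine Finset.sum_congr rfl fun i _ => ?_
      show (eval fun j => x j) ((pderiv i) p) * x j * y i
          = x j * ((eval fun j => x j) ((pderiv i) p) * y i)
      ring

lemma dimH_le_locally {X : Type*} [EMetricSpace X] [SecondCountableTopology X]
    {s : Set X} {d : ℝ≥0∞} (h : ∀ x ∈ s, ∃ t ∈ nhdsWithin x s, dimH t ≤ d) :
    dimH s ≤ d := by
  choose! t ht hd using h
  rcases TopologicalSpace.countable_cover_nhdsWithin ht with ⟨u, hus, huc, huU⟩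
  calc dimH s ≤ dimH (⋃ x ∈ u, t x) := dimH_mono huU
    _ = ⨆ x ∈ u, dimH (t x) := dimH_bUnion huc _
    _ ≤ d := iSup₂_le fun x hx => hd x (hus hx)

lemma dimH_ker_le {n : ℕ} (L : EuclideanSpace ℝ (Fin n) →L[ℝ] ℝ) (hL : L ≠ 0) :
    dimH {x : EuclideanSpace ℝ (Fin n) | L x = 0} ≤ (n : ℝ≥0∞) - 1 := by
  set l : EuclideanSpace ℝ (Fin n) →ₗ[ℝ] ℝ := (L : EuclideanSpace ℝ (Fin n) →ₗ[ℝ] ℝ) with hl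
  set K : Submodule ℝ (EuclideanSpace ℝ (Fin n)) := LinearMap.ker l with hK
  have hset : {x : EuclideanSpace ℝ (Fin n) | L x = 0} = (K : Set (EuclideanSpace ℝ (Fin n))) := by
    ext x
    simp [hK, LinearMap.mem_ker, hl]
  rw [hset]
  have h1 : dimH (K : Set (EuclideanSpace ℝ (Fin n))) = (Module.finrank ℝ K : ℝ≥0∞) := by
    have him := (K.subtypeₗᵢ (R' := ℝ)).isometry.dimH_image (univ : Set K)
    rw [image_univ] at him
    have hrange : Set.range (K.subtypeₗᵢ (R' := ℝ)) = (K : Set (EuclideanSpace ℝ (Fin n))) := by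
      simp [Submodule.coe_subtypeₗᵢ]
    rw [hrange] at him
    rw [him, Real.dimH_univ_eq_finrank]
  rw [h1]
  have hrank : Module.finrank ℝ (LinearMap.range l) + Module.finrank ℝ K =
      Module.finrank ℝ (EuclideanSpace ℝ (Fin n)) :=
    LinearMap.finrank_range_add_finrank_ker l
  have hrange1 : Module.finrank ℝ (LinearMap.range l) = 1 := by
    obtain ⟨v, hv⟩ : ∃ v, L v ≠ 0 := by
      by_contra h
      push_neg at h
      exact hL (ContinuousLinearMap.ext fun v => by simp [h v])
    have htop : LinearMap.range l = ⊤ := by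
      rw [LinearMap.range_eq_top]
      intro c
      refine ⟨(c / L v) • v, ?_⟩
      have : l ((c / L v) • v) = (c / L v) * L v := by
        simp [hl, smul_eq_mul]
      rw [this]
      field_simp
    rw [htop]
    simp [Module.finrank_self]
  rw [finrank_euclideanSpace_fin] at hrank
  rw [hrange1] at hrank
  have : Module.finrank ℝ K = n - 1 := by omega
  rw [this, ← Nat.cast_one (R := ℝ≥0∞)]
  rw [← ENNReal.natCast_sub]

lemma dimH_zero_inter_le_of_fderiv_ne {n : ℕ} {f : EuclideanSpace ℝ (Fin n) → ℝ}
    (hf : ContDiff ℝ ⊤ f) {a : EuclideanSpace ℝ (Fin n)}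
    (ha : fderiv ℝ f a ≠ 0) :
    ∃ s ∈ 𝓝 a, dimH ({x : EuclideanSpace ℝ (Fin n) | f x = 0} ∩ s) ≤ (n : ℝ≥0∞) - 1 := by
  set L : EuclideanSpace ℝ (Fin n) →L[ℝ] ℝ := fderiv ℝ f a with hL
  obtain ⟨u, hu⟩ : ∃ u, L u ≠ 0 := by
    by_contra h
    push_neg at h
    exact ha (ContinuousLinearMap.ext fun u => by simp [h u])
  set v : EuclideanSpace ℝ (Fin n) := (L u)⁻¹ • u with hv
  have hLv : L v = 1 := by
    simp [hv, map_smul, smul_eq_mul, inv_mul_cancel₀ hu]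
  set φ : EuclideanSpace ℝ (Fin n) → EuclideanSpace ℝ (Fin n) :=
    fun x => x + (f x - L x) • v with hφ
  have hdf : HasFDerivAt f L a := (hf.differentiable (by simp) a).hasFDerivAt
  have h2 : HasFDerivAt (fun x => (f x - L x) • v) ((L - L).smulRight v) a :=
    (hdf.sub L.hasFDerivAt).smul_const v
  have hφderiv : HasFDerivAt φ (ContinuousLinearMap.id ℝ (EuclideanSpace ℝ (Fin n))) a := by
    have h3 := (hasFDerivAt_id a).add h2
    convert h3 using 1 <;> try rfl
    ext y
    simp
  have hφc : ContDiffAt ℝ 1 φ a := by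
    have : ContDiff ℝ 1 φ :=
      contDiff_id.add (((hf.of_le le_top).sub L.contDiff).smul contDiff_const)
    exact this.contDiffAt
  have hstrict : HasStrictFDerivAt φ
      ((ContinuousLinearEquiv.refl ℝ (EuclideanSpace ℝ (Fin n))) :
        EuclideanSpace ℝ (Fin n) →L[ℝ] EuclideanSpace ℝ (Fin n)) a := by
    have := hφc.hasStrictFDerivAt' hφderiv one_ne_zero
    simpa using this
  set g := hstrict.localInverse φ _ a with hg
  have hginv : HasStrictFDerivAt g
      (((ContinuousLinearEquiv.refl ℝ (EuclideanSpace ℝ (Fin n))).symm) :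
        EuclideanSpace ℝ (Fin n) →L[ℝ] EuclideanSpace ℝ (Fin n)) (φ a) :=
    hstrict.to_localInverse
  obtain ⟨K, t, ht, hlip⟩ := hginv.exists_lipschitzOnWith
  have hev : ∀ᶠ x in 𝓝 a, g (φ x) = x := hstrict.eventually_left_inverse
  have hφcont : ContinuousAt φ a := hφc.continuousAt
  set s := φ ⁻¹' t ∩ {x | g (φ x) = x} with hs
  have hsmem : s ∈ 𝓝 a := Filter.inter_mem (hφcont.preimage_mem_nhds ht) hev
  refine ⟨s, hsmem, ?_⟩
  have hsub : {x : EuclideanSpace ℝ (Fin n) | f x = 0} ∩ s ⊆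
      g '' ({y : EuclideanSpace ℝ (Fin n) | L y = 0} ∩ t) := by
    rintro x ⟨hx, hxt, hgx⟩
    refine ⟨φ x, ⟨?_, hxt⟩, hgx⟩
    show L (φ x) = 0
    have hx0 : f x = 0 := hx
    simp [hφ, map_add, map_smul, smul_eq_mul, hLv, hx0]
  calc dimH ({x : EuclideanSpace ℝ (Fin n) | f x = 0} ∩ s)
      ≤ dimH (g '' ({y : EuclideanSpace ℝ (Fin n) | L y = 0} ∩ t)) := dimH_mono hsub
    _ ≤ dimH ({y : EuclideanSpace ℝ (Fin n) | L y = 0} ∩ t) :=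
        (hlip.mono inter_subset_right).dimH_image_le
    _ ≤ dimH {y : EuclideanSpace ℝ (Fin n) | L y = 0} := dimH_mono inter_subset_left
    _ ≤ (n : ℝ≥0∞) - 1 := dimH_ker_le L ha

lemma dimH_regular_le {n : ℕ} {f : EuclideanSpace ℝ (Fin n) → ℝ}
    (hf : ContDiff ℝ ⊤ f) :
    dimH {x : EuclideanSpace ℝ (Fin n) | f x = 0 ∧ fderiv ℝ f x ≠ 0} ≤ (n : ℝ≥0∞) - 1 := by
  refine dimH_le_locally fun x hx => ?_
  obtain ⟨s, hs, hd⟩ := dimH_zero_inter_le_of_fderiv_ne hf hx.2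
  refine ⟨{y : EuclideanSpace ℝ (Fin n) | f y = 0} ∩ s, ?_, hd⟩
  exact Filter.inter_mem
    (Filter.mem_of_superset self_mem_nhdsWithin fun y hy => hy.1)
    (nhdsWithin_le_nhds hs)

lemma dimH_zero_eval_le {n : ℕ} (d : ℕ) (p : MvPolynomial (Fin n) ℝ)
    (hd : p.totalDegree ≤ d) (hp : p ≠ 0) :
    dimH {x : EuclideanSpace ℝ (Fin n) | eval (fun i => x i) p = 0} ≤ (n : ℝ≥0∞) - 1 := by
  induction d generalizing p with
  | zero =>
    have h0 : p.totalDegree = 0 := Nat.le_zero.mp hd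
    have hc := eq_C_of_totalDegree_eq_zero' h0
    have hcoeff : coeff 0 p ≠ 0 := fun h => hp (by rw [hc, h, map_zero])
    have hempty : {x : EuclideanSpace ℝ (Fin n) | eval (fun i => x i) p = 0} = ∅ := by
      ext x
      simp only [Set.mem_setOf_eq, Set.mem_empty_iff_false, iff_false]
      rw [hc, eval_C]
      exact hcoeff
    rw [hempty, dimH_empty]
    exact zero_le
  | succ d ih =>
    by_cases h0 : p.totalDegree = 0
    · have hc := eq_C_of_totalDegree_eq_zero' h0
      have hcoeff : coeff 0 p ≠ 0 := fun h => hp (by rw [hc, h, map_zero])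
      have hempty : {x : EuclideanSpace ℝ (Fin n) | eval (fun i => x i) p = 0} = ∅ := by
        ext x
        simp only [Set.mem_setOf_eq, Set.mem_empty_iff_false, iff_false]
        rw [hc, eval_C]
        exact hcoeff
      rw [hempty, dimH_empty]
      exact zero_le
    · obtain ⟨i, hi⟩ := exists_pderiv_ne_zero' h0
      have hlt := totalDegree_pderiv_lt' h0 i
      set f : EuclideanSpace ℝ (Fin n) → ℝ := fun x => eval (fun i => x i) p with hfdef
      have hsub : {x : EuclideanSpace ℝ (Fin n) | f x = 0} ⊆
          {x : EuclideanSpace ℝ (Fin n) | f x = 0 ∧ fderiv ℝ f x ≠ 0} ∪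
          {x : EuclideanSpace ℝ (Fin n) | eval (fun j => x j) (pderiv i p) = 0} := by
        intro x hx
        by_cases hx' : fderiv ℝ f x ≠ 0
        · left; exact ⟨hx, hx'⟩
        · right
          push_neg at hx'
          have hfd := (hasFDerivAt_evalE p x).fderiv
          have hzero : (∑ j, eval (fun k => x k) (pderiv j p) •
              (EuclideanSpace.proj j : EuclideanSpace ℝ (Fin n) →L[ℝ] ℝ)) = 0 := by
            rw [← hfd]
            exact hx'
          have happ := congrArg
            (fun T : EuclideanSpace ℝ (Fin n) →L[ℝ] ℝ => T (EuclideanSpace.single i 1)) hzero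
          simp only [ContinuousLinearMap.sum_apply, ContinuousLinearMap.smul_apply,
            smul_eq_mul, ContinuousLinearMap.zero_apply] at happ
          have hcoord : ∀ j : Fin n,
              (EuclideanSpace.proj j : EuclideanSpace ℝ (Fin n) →L[ℝ] ℝ)
                (EuclideanSpace.single i 1) = if j = i then 1 else 0 := by
            intro j
            show (EuclideanSpace.single i (1:ℝ)) j = _
            rw [EuclideanSpace.single_apply]
          rw [Finset.sum_congr rfl (fun j _ => by rw [hcoord j])] at happ
          simp only [mul_ite, mul_one, mul_zero, Finset.sum_ite_eq', Finset.mem_univ,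
            if_true] at happ
          exact happ
      refine le_trans (dimH_mono hsub) ?_
      rw [dimH_union]
      refine max_le (dimH_regular_le (contDiff_evalE p)) (ih (pderiv i p) ?_ hi)
      omega

lemma isPolyFun_exists_poly {n : ℕ} {f : EuclideanSpace ℝ (Fin n) → ℝ} (hf : IsPolyFun f) :
    ∃ p : MvPolynomial (Fin n) ℝ, f = fun x => eval (fun i => x i) p := by
  classical
  set φ : MvPolynomial (Fin n) ℝ →ₐ[ℝ] (EuclideanSpace ℝ (Fin n) → ℝ) :=
    MvPolynomial.aeval (fun i => (fun x : EuclideanSpace ℝ (Fin n) => x i)) with hφ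
  have hle : Algebra.adjoin ℝ {g : EuclideanSpace ℝ (Fin n) → ℝ | IsLinearMap ℝ g} ≤ φ.range := by
    rw [Algebra.adjoin_le_iff]
    rintro g hg
    set G : EuclideanSpace ℝ (Fin n) →ₗ[ℝ] ℝ := IsLinearMap.mk' g hg with hG
    refine ⟨∑ i, C (G (EuclideanSpace.single i 1)) * X i, ?_⟩
    show φ (∑ i, C (G (EuclideanSpace.single i 1)) * X i) = g
    funext x
    have hterm : ∀ i : Fin n,
        (φ (C (G (EuclideanSpace.single i 1)) * X i)) x = G (EuclideanSpace.single i 1) * x i := by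
      intro i
      rw [map_mul]
      simp [hφ, aeval_C, aeval_X]
    rw [map_sum, Finset.sum_apply]
    rw [Finset.sum_congr rfl fun i _ => hterm i]
    have hx : (x : EuclideanSpace ℝ (Fin n)) = ∑ i, x i • EuclideanSpace.single i (1:ℝ) := by
      have hsum := (EuclideanSpace.basisFun (Fin n) ℝ).sum_repr x
      conv_lhs => rw [← hsum]
      refine Finset.sum_congr rfl fun i _ => ?_
      rw [EuclideanSpace.basisFun_repr, EuclideanSpace.basisFun_apply]
    have hGx : G x = ∑ i, x i * G (EuclideanSpace.single i 1) := by
      conv_lhs => rw [hx]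
      rw [map_sum]
      refine Finset.sum_congr rfl fun i _ => ?_
      rw [map_smul, smul_eq_mul]
    rw [show g x = G x from rfl, hGx]
    exact Finset.sum_congr rfl fun i _ => (mul_comm _ _).symm
  obtain ⟨p, hp⟩ := hle hf
  have hp' : φ p = f := hp
  refine ⟨p, ?_⟩
  funext x
  rw [← hp']
  have h1 : φ p x = Pi.evalAlgHom ℝ (fun _ : EuclideanSpace ℝ (Fin n) => ℝ) x (φ p) := rfl
  rw [h1, hφ, MvPolynomial.comp_aeval_apply]
  show aeval (fun i => x i) p = eval (fun i => x i) p
  rw [← MvPolynomial.coe_aeval_eq_eval]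
  rfl

end Aux

/-- The zero set of a polynomial function `ℝⁿ → ℝ` that does not vanish identically has
Hausdorff dimension at most `n - 1` (with respect to the Euclidean metric). -/
theorem dimH_zeroSet_le {n : ℕ} (f : EuclideanSpace ℝ (Fin n) → ℝ)
    (hf : IsPolyFun f) (hne : ∃ x, f x ≠ 0) :
    dimH {x : EuclideanSpace ℝ (Fin n) | f x = 0} ≤ (n : ℝ≥0∞) - 1 := by
  obtain ⟨p, rfl⟩ := isPolyFun_exists_poly hf
  have hp : p ≠ 0 := by
    rintro rfl
    obtain ⟨x, hx⟩ := hne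
    exact hx (by simp)
  exact dimH_zero_eval_le p.totalDegree p le_rfl hp
end

section
/- (Mautner phenomenon.) Suppose π : G → O(ℌ) is a strongly continuous orthogonal representation of a connected Lie group G on a separable real Hilbert space ℌ, that H ≤ G is a connected Lie subgroup, that g ∈ G, and that there are sequences g_i ∈ G and h_i, h_i' ∈ H with g_i → e and g_i h_i g_i⁻¹ h_i' → g. Then every vector of ℌ fixed by π(h) for all h ∈ H is also fixed by π(g); that is, Fix(π(g)) ⊇ Fix(π(H)). -/
open Filter

/-- **The Mautner phenomenon.**
Let `π` be a strongly continuous orthogonal representation of a connected Lie group `G` on a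
separable real Hilbert space `ℌ`, let `H ≤ G` be a connected Lie subgroup, and suppose `g ∈ G`
is such that there are sequences `gᵢ ∈ G` and `hᵢ, hᵢ' ∈ H` with `gᵢ → e` and
`gᵢ hᵢ gᵢ⁻¹ hᵢ' → g`.  Then every vector fixed by `π(h)` for all `h ∈ H` is fixed by `π(g)`. -/
theorem mautner_phenomenon
    {E𝔪 H𝔪 : Type*} [NormedAddCommGroup E𝔪] [NormedSpace ℝ E𝔪] [TopologicalSpace H𝔪]
    {I : ModelWithCorners ℝ E𝔪 H𝔪}
    {G : Type*} [Group G] [TopologicalSpace G] [IsTopologicalGroup G] [ChartedSpace H𝔪 G]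
    [LieGroup I (⊤ : ℕ∞) G] [ConnectedSpace G]
    {ℌ : Type*} [NormedAddCommGroup ℌ] [InnerProductSpace ℝ ℌ] [CompleteSpace ℌ]
    [TopologicalSpace.SeparableSpace ℌ]
    (π : G →* (ℌ ≃ₗᵢ[ℝ] ℌ)) (hπcont : ∀ v : ℌ, Continuous fun g : G => π g v)
    (H : Subgroup G) (hHconn : IsConnected (H : Set G))
    (g : G) (gs hs hs' : ℕ → G)
    (hhsmem : ∀ i, hs i ∈ H) (hhs'mem : ∀ i, hs' i ∈ H)
    (hgs : Tendsto gs atTop (nhds (1 : G)))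
    (hconv : Tendsto (fun i => gs i * hs i * (gs i)⁻¹ * hs' i) atTop (nhds g))
    (v : ℌ) (hv : ∀ h ∈ H, π h v = v) :
    π g v = v := by
  have h1 : Tendsto (fun i => π (gs i * hs i * (gs i)⁻¹ * hs' i) v) atTop (nhds (π g v)) :=
    ((hπcont v).continuousAt.tendsto).comp hconv
  have key : ∀ i, π (gs i * hs i * (gs i)⁻¹ * hs' i) v
      = π (gs i) (π (hs i) (π (gs i)⁻¹ v)) := by
    intro i
    simp [map_mul, LinearIsometryEquiv.coe_mul, Function.comp, hv _ (hhs'mem i)]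
  have t1 : Tendsto (fun i => π (gs i)⁻¹ v) atTop (nhds v) := by
    have : Tendsto (fun i => (gs i)⁻¹) atTop (nhds (1 : G)) := by
      simpa using hgs.inv
    have h0 := ((hπcont v).continuousAt.tendsto).comp this
    simpa only [Function.comp_def, map_one, LinearIsometryEquiv.coe_one, id_eq] using h0
  have t2 : Tendsto (fun i => π (gs i) v) atTop (nhds v) := by
    have h0 := ((hπcont v).continuousAt.tendsto).comp hgs
    simpa only [Function.comp_def, map_one, LinearIsometryEquiv.coe_one, id_eq] using h0
  have hbound : ∀ i, ‖π (gs i) (π (hs i) (π (gs i)⁻¹ v)) - v‖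
      ≤ ‖π (gs i)⁻¹ v - v‖ + ‖π (gs i) v - v‖ := by
    intro i
    calc ‖π (gs i) (π (hs i) (π (gs i)⁻¹ v)) - v‖
        ≤ ‖π (gs i) (π (hs i) (π (gs i)⁻¹ v)) - π (gs i) v‖ + ‖π (gs i) v - v‖ :=
          norm_sub_le_norm_sub_add_norm_sub _ _ _
      _ = ‖π (hs i) (π (gs i)⁻¹ v) - π (hs i) v‖ + ‖π (gs i) v - v‖ := by
          rw [← map_sub, (π (gs i)).norm_map, hv _ (hhsmem i)]
      _ = ‖π (gs i)⁻¹ v - v‖ + ‖π (gs i) v - v‖ := by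
          rw [← map_sub, (π (hs i)).norm_map]
  have hzero : Tendsto (fun i => ‖π (gs i) (π (hs i) (π (gs i)⁻¹ v)) - v‖) atTop (nhds 0) := by
    have hlim : Tendsto (fun i => ‖π (gs i)⁻¹ v - v‖ + ‖π (gs i) v - v‖) atTop (nhds 0) := by
      have a1 : Tendsto (fun i => ‖π (gs i)⁻¹ v - v‖) atTop (nhds 0) :=
        tendsto_iff_norm_sub_tendsto_zero.mp t1
      have a2 : Tendsto (fun i => ‖π (gs i) v - v‖) atTop (nhds 0) :=
        tendsto_iff_norm_sub_tendsto_zero.mp t2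
      simpa using a1.add a2
    exact squeeze_zero (fun i => norm_nonneg _) hbound hlim
  have h2 : Tendsto (fun i => π (gs i) (π (hs i) (π (gs i)⁻¹ v))) atTop (nhds v) :=
    tendsto_iff_norm_sub_tendsto_zero.mpr hzero
  have h1' : Tendsto (fun i => π (gs i) (π (hs i) (π (gs i)⁻¹ v))) atTop (nhds (π g v)) := by
    simp only [key] at h1; exact h1
  exact tendsto_nhds_unique h1' h2
end

section
/- If 𝖢 is an idempotent class of G-systems and X = (X, Σ, μ, u) is any G-system, then X has an essentially unique largest factor Λ ≤ Σ that may be generated by a factor map to a member of 𝖢: that is, there is a globally u-invariant σ-subalgebra Λ of Σ which is generated modulo μ-negligible sets by a factor map from X to some member of 𝖢, and which contains, up to μ-negligible sets, every σ-subalgebra of Σ generated by a factor map from X to a member of 𝖢. -/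
open MeasureTheory

variable (G : Type*) [Group G] [TopologicalSpace G] [MeasurableSpace G]

/-- A jointly measurable, probability-preserving `G`-system on a standard Borel space. -/
structure GSystem where
  (carrier : Type)
  [ms : MeasurableSpace carrier]
  [sb : StandardBorelSpace carrier]
  (μ : Measure carrier)
  (prob : IsProbabilityMeasure μ)
  (act : G → carrier → carrier)
  (act_one : ∀ x, act 1 x = x)
  (act_mul : ∀ g g' x, act (g * g') x = act g (act g' x))
  (jointly_meas : Measurable fun p : G × carrier => act p.1 p.2)
  (preserves : ∀ g, MeasurePreserving (act g) μ μ)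

attribute [instance] GSystem.ms GSystem.sb

variable {G}

/-- `f` is a factor map from the system `Y` onto the system `X`. -/
def IsFactorMap (Y X : GSystem G) (f : Y.carrier → X.carrier) : Prop :=
  Measurable f ∧ Measure.map f Y.μ = X.μ ∧
    ∀ g : G, ∀ᵐ y ∂Y.μ, f (Y.act g y) = X.act g (f y)

/-- `X` is a factor of `Y`. -/
def IsFactorOf (X Y : GSystem G) : Prop := ∃ f, IsFactorMap Y X f

/-- Measure-theoretic isomorphism of `G`-systems. -/
def Isomorphic (X Y : GSystem G) : Prop :=
  ∃ (f : X.carrier → Y.carrier) (g : Y.carrier → X.carrier),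
    IsFactorMap X Y f ∧ IsFactorMap Y X g ∧
    (∀ᵐ x ∂X.μ, g (f x) = x) ∧ (∀ᵐ y ∂Y.μ, f (g y) = y)

/-- A joining of a countable family of `G`-systems: a probability measure on the product with
the prescribed marginals, invariant under the diagonal action. -/
def IsJoining {ι : Type} (Xs : ι → GSystem G) (lam : Measure (∀ i, (Xs i).carrier)) : Prop :=
  IsProbabilityMeasure lam ∧
  (∀ i, Measure.map (fun x => x i) lam = (Xs i).μ) ∧
  (∀ g : G, Measure.map (fun x i => (Xs i).act g (x i)) lam = lam)

/-- The `G`-system obtained from a joining of a countable family of `G`-systems. -/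
noncomputable def joinSystem {ι : Type} [Countable ι] (Xs : ι → GSystem G)
    (lam : Measure (∀ i, (Xs i).carrier)) (hlam : IsJoining Xs lam) : GSystem G where
  carrier := ∀ i, (Xs i).carrier
  μ := lam
  prob := hlam.1
  act g x := fun i => (Xs i).act g (x i)
  act_one x := funext fun i => (Xs i).act_one (x i)
  act_mul g g' x := funext fun i => (Xs i).act_mul g g' (x i)
  jointly_meas := measurable_pi_iff.2 fun i =>
    (Xs i).jointly_meas.comp (measurable_fst.prodMk ((measurable_pi_apply i).comp measurable_snd))
  preserves g :=
    ⟨measurable_pi_iff.2 fun i =>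
        (Xs i).jointly_meas.comp (measurable_const.prodMk (measurable_pi_apply i)),
      hlam.2.2 g⟩

/-- `Z` is an inverse limit of the tower of systems `Xs 0 ← Xs 1 ← ⋯`. -/
def IsInverseLimit (Z : GSystem G) (Xs : ℕ → GSystem G) : Prop :=
  ∃ π : ∀ n, Z.carrier → (Xs n).carrier,
    (∀ n, IsFactorMap Z (Xs n) (π n)) ∧
    (∀ n, ∃ f, IsFactorMap (Xs (n + 1)) (Xs n) f ∧ ∀ᵐ z ∂Z.μ, π n z = f (π (n + 1) z)) ∧
    (∀ A : Set Z.carrier, MeasurableSet A →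
      ∃ B : Set Z.carrier,
        MeasurableSet[⨆ n, MeasurableSpace.comap (π n) (Xs n).ms] B ∧
        Z.μ (symmDiff A B) = 0)

/-- An *idempotent class* of `G`-systems: a class closed under measure-theoretic isomorphism,
inverse limits and arbitrary (countable) joinings. -/
structure IsIdempotentClass (C : Set (GSystem G)) : Prop where
  (iso_closed : ∀ X ∈ C, ∀ Y : GSystem G, Isomorphic X Y → Y ∈ C)
  (joining_closed : ∀ (ι : Type) [Countable ι], ∀ (Xs : ι → GSystem G)
    (lam : Measure (∀ i, (Xs i).carrier)) (hlam : IsJoining Xs lam),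
    (∀ i, Xs i ∈ C) → joinSystem Xs lam hlam ∈ C)
  (invLim_closed : ∀ (Xs : ℕ → GSystem G) (Z : GSystem G),
    (∀ n, Xs n ∈ C) → IsInverseLimit Z Xs → Z ∈ C)

/-- A class of systems is *hereditary* if it is closed under passing to factors. -/
def IsHereditary (C : Set (GSystem G)) : Prop :=
  ∀ X ∈ C, ∀ Y : GSystem G, IsFactorOf Y X → Y ∈ C

set_option linter.unusedSectionVars false in
/-- The trivial joining of the empty family of systems. -/
lemma trivJoining : IsJoining (G := G) (fun i : Empty => i.elim)
    (Measure.dirac (fun i : Empty => i.elim)) := by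
  refine ⟨by infer_instance, fun i => i.elim, fun g => ?_⟩
  have h : (fun (x : ∀ i : Empty, ((fun i : Empty => i.elim : Empty → GSystem G) i).carrier)
      (i : Empty) => ((fun i : Empty => i.elim : Empty → GSystem G) i).act g (x i)) = id :=
    funext fun x => funext fun i => i.elim
  rw [h, Measure.map_id]

/-- The trivial (one-point) system, obtained as the empty joining. -/
noncomputable def trivSys : GSystem G :=
  joinSystem (fun i : Empty => i.elim) (Measure.dirac (fun i : Empty => i.elim)) trivJoining

set_option linter.unusedSectionVars false in
/-- The constant map is a factor map onto the trivial system. -/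
lemma constFactor (X : GSystem G) :
    IsFactorMap X (trivSys (G := G)) (fun _ => (fun i : Empty => i.elim : ∀ i : Empty, ((fun i : Empty => i.elim : Empty → GSystem G) i).carrier)) := by
  refine ⟨measurable_const, ?_, fun g => Filter.Eventually.of_forall fun x =>
    funext fun i => i.elim⟩
  have := X.prob
  refine (Measure.map_const _ _).trans ?_
  rw [measure_univ, one_smul]
  rfl

/-- **Existence of maximal 𝖢-factors.**
If `𝖢` is an idempotent class of `G`-systems and `X` is any `G`-system, then `X` has a largest
factor generated by a factor map to a member of `𝖢`: a globally invariant σ-subalgebra `Λ ≤ Σ`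
which is generated up to `μ`-negligible sets by a factor map to a member of `𝖢`, and which
contains, up to `μ`-negligible sets, every σ-subalgebra generated by a factor map from `X` to a
member of `𝖢`. -/
theorem exists_maximal_idempotentClass_factor
    {G : Type*} [Group G] [TopologicalSpace G] [IsTopologicalGroup G] [MeasurableSpace G]
    [BorelSpace G] [LocallyCompactSpace G] [SecondCountableTopology G]
    (C : Set (GSystem G)) (hC : IsIdempotentClass C) (X : GSystem G) :
    ∃ Λ : MeasurableSpace X.carrier,
      Λ ≤ X.ms ∧
      (∀ g : G, ∀ A : Set X.carrier, MeasurableSet[Λ] A → MeasurableSet[Λ] (X.act g ⁻¹' A)) ∧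
      (∃ Y ∈ C, ∃ f : X.carrier → Y.carrier, IsFactorMap X Y f ∧
        (∀ A : Set X.carrier, MeasurableSet[Λ] A →
          ∃ B, MeasurableSet[MeasurableSpace.comap f Y.ms] B ∧ X.μ (symmDiff A B) = 0) ∧
        (∀ B : Set X.carrier, MeasurableSet[MeasurableSpace.comap f Y.ms] B →
          ∃ A, MeasurableSet[Λ] A ∧ X.μ (symmDiff A B) = 0)) ∧
      (∀ Y' ∈ C, ∀ f' : X.carrier → Y'.carrier, IsFactorMap X Y' f' →
        ∀ A : Set X.carrier, MeasurableSet[MeasurableSpace.comap f' Y'.ms] A →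
          ∃ B, MeasurableSet[Λ] B ∧ X.μ (symmDiff A B) = 0) := by
  classical
  haveI := X.prob
  have htrivC : trivSys (G := G) ∈ C :=
    hC.joining_closed Empty _ _ trivJoining (fun i => i.elim)
  -- a countable measure-dense family of sets
  obtain ⟨𝒜, hcount, hdense⟩ :
      ∃ 𝒜 : Set (Set X.carrier), 𝒜.Countable ∧ X.μ.MeasureDense 𝒜 :=
    exists_countable_measureDense X.μ
  haveI := hcount.to_subtype
  -- choose near-optimal 𝖢-factor approximants for each (s, n)
  have hpick : ∀ (s : Set X.carrier) (n : ℕ), ∃ (Y : GSystem G) (f : X.carrier → Y.carrier)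
      (B : Set X.carrier), Y ∈ C ∧ IsFactorMap X Y f ∧
      MeasurableSet[MeasurableSpace.comap f Y.ms] B ∧
      ((∃ (Y' : GSystem G) (f' : X.carrier → Y'.carrier) (A : Set X.carrier), Y' ∈ C ∧
          IsFactorMap X Y' f' ∧ MeasurableSet[MeasurableSpace.comap f' Y'.ms] A ∧
          X.μ (symmDiff s A) < ((n : ENNReal) + 1)⁻¹) →
        X.μ (symmDiff s B) < ((n : ENNReal) + 1)⁻¹) := by
    intro s n
    by_cases h : ∃ (Y' : GSystem G) (f' : X.carrier → Y'.carrier) (A : Set X.carrier), Y' ∈ C ∧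
        IsFactorMap X Y' f' ∧ MeasurableSet[MeasurableSpace.comap f' Y'.ms] A ∧
        X.μ (symmDiff s A) < ((n : ENNReal) + 1)⁻¹
    · obtain ⟨Y', f', A, hY', hf', hA, hlt⟩ := h
      exact ⟨Y', f', A, hY', hf', hA, fun _ => hlt⟩
    · exact ⟨trivSys, fun _ => (fun i : Empty => i.elim : ∀ i : Empty, ((fun i : Empty => i.elim : Empty → GSystem G) i).carrier), ∅, htrivC, constFactor X,
        ⟨∅, MeasurableSet.empty, Set.preimage_empty⟩, fun hh => absurd hh h⟩
  choose Ys fs Bs hYsC hfs hBs happrox using hpick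
  -- the countable joining
  set ι : Type := ↥𝒜 × ℕ with hι
  set Xs : ι → GSystem G := fun i => Ys i.1.1 i.2 with hXs
  set F : X.carrier → ∀ i, (Xs i).carrier := fun x i => fs i.1.1 i.2 x with hF
  have hFmeas : Measurable F := measurable_pi_iff.2 fun i => (hfs i.1.1 i.2).1
  set lam : Measure (∀ i, (Xs i).carrier) := Measure.map F X.μ with hlam
  have hjoin : IsJoining Xs lam := by
    refine ⟨Measure.isProbabilityMeasure_map hFmeas.aemeasurable, fun i => ?_, fun g => ?_⟩
    · rw [hlam, Measure.map_map (measurable_pi_apply i) hFmeas]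
      exact (hfs i.1.1 i.2).2.1
    · have hactY : Measurable (fun x : ∀ i, (Xs i).carrier => fun i => (Xs i).act g (x i)) :=
        measurable_pi_iff.2 fun i =>
          (Xs i).jointly_meas.comp (measurable_const.prodMk (measurable_pi_apply i))
      have hae : ((fun x : ∀ i, (Xs i).carrier => fun i => (Xs i).act g (x i)) ∘ F)
          =ᵐ[X.μ] (F ∘ X.act g) :=
        (MeasureTheory.ae_all_iff.2 fun i : ι => (hfs i.1.1 i.2).2.2 g).mono
          fun x hx => funext fun i => (hx i).symm
      calc Measure.map (fun x i => (Xs i).act g (x i)) lam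
          = Measure.map ((fun x : ∀ i, (Xs i).carrier => fun i => (Xs i).act g (x i)) ∘ F) X.μ :=
            by rw [hlam, Measure.map_map hactY hFmeas]
        _ = Measure.map (F ∘ X.act g) X.μ := Measure.map_congr hae
        _ = Measure.map F (Measure.map (X.act g) X.μ) :=
            (Measure.map_map hFmeas (X.preserves g).measurable).symm
        _ = lam := by rw [(X.preserves g).map_eq]
  set Y : GSystem G := joinSystem Xs lam hjoin with hY
  have hYC : Y ∈ C := hC.joining_closed ι Xs lam hjoin (fun i => hYsC i.1.1 i.2)
  have hFfac : IsFactorMap X Y F := by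
    refine ⟨hFmeas, rfl, fun g => ?_⟩
    exact (MeasureTheory.ae_all_iff.2 fun i : ι => (hfs i.1.1 i.2).2.2 g).mono
      fun x hx => funext fun i => hx i
  -- each piece's factor algebra sits inside that of F
  have hsub : ∀ i : ι, ∀ B : Set X.carrier,
      MeasurableSet[MeasurableSpace.comap (fs i.1.1 i.2) (Xs i).ms] B →
      MeasurableSet[MeasurableSpace.comap F Y.ms] B := by
    intro i B hB
    obtain ⟨B', hB', rfl⟩ := hB
    exact ⟨(fun y : ∀ j, (Xs j).carrier => y i) ⁻¹' B', (measurable_pi_apply i) hB', rfl⟩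
  -- key density: any 𝖢-factor set is approximable by comap F sets
  have hkey : ∀ (Y' : GSystem G), Y' ∈ C → ∀ f' : X.carrier → Y'.carrier, IsFactorMap X Y' f' →
      ∀ A : Set X.carrier, MeasurableSet[MeasurableSpace.comap f' Y'.ms] A →
      ∀ ε : ENNReal, 0 < ε → ∃ B, MeasurableSet[MeasurableSpace.comap F Y.ms] B ∧
        X.μ (symmDiff A B) < ε := by
    intro Y' hY' f' hf' A hA ε hε
    have hAmeas : MeasurableSet A := by
      obtain ⟨A', hA', rfl⟩ := hA
      exact hf'.1 hA'
    rcases eq_or_ne ε ⊤ with rfl | hεtop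
    · refine ⟨∅, ⟨∅, MeasurableSet.empty, Set.preimage_empty⟩, ?_⟩
      rw [show symmDiff A (∅ : Set X.carrier) = A by simp]
      exact measure_lt_top X.μ A
    · -- choose n with (n+1)⁻¹ < ε/2
      obtain ⟨n, hn⟩ := ENNReal.exists_inv_nat_lt
        (ne_of_gt (ENNReal.half_pos (ne_of_gt hε)))
      have hn1 : ((n : ENNReal) + 1)⁻¹ < ε / 2 :=
        lt_of_le_of_lt (ENNReal.inv_le_inv.2 (by simp)) hn
      -- approximate A by a set in 𝒜
      obtain ⟨t, ht, hts⟩ := hdense.approx A hAmeas (measure_ne_top X.μ A)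
        (1 / ((n : ℝ) + 1)) (by positivity)
      have hofReal : ENNReal.ofReal (1 / ((n : ℝ) + 1)) = ((n : ENNReal) + 1)⁻¹ := by
        rw [one_div, ENNReal.ofReal_inv_of_pos (by positivity)]
        rw [ENNReal.ofReal_add (by positivity) zero_le_one]
        simp
      rw [hofReal] at hts
      have hhyp : X.μ (symmDiff t (Bs t n)) < ((n : ENNReal) + 1)⁻¹ :=
        happrox t n ⟨Y', f', A, hY', hf', hA, by rwa [symmDiff_comm]⟩
      refine ⟨Bs t n, hsub (⟨t, ht⟩, n) _ (hBs t n), ?_⟩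
      calc X.μ (symmDiff A (Bs t n)) ≤ X.μ (symmDiff A t) + X.μ (symmDiff t (Bs t n)) :=
            measure_symmDiff_le _ _ _
        _ < ((n : ENNReal) + 1)⁻¹ + ((n : ENNReal) + 1)⁻¹ := ENNReal.add_lt_add hts hhyp
        _ ≤ ε / 2 + ε / 2 := add_le_add hn1.le hn1.le
        _ = ε := ENNReal.add_halves ε
  -- exact (mod null) containment via a limsup argument
  have hnull : ∀ (Y' : GSystem G), Y' ∈ C → ∀ f' : X.carrier → Y'.carrier, IsFactorMap X Y' f' →
      ∀ A : Set X.carrier, MeasurableSet[MeasurableSpace.comap f' Y'.ms] A →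
      ∃ B, MeasurableSet[MeasurableSpace.comap F Y.ms] B ∧ X.μ (symmDiff A B) = 0 := by
    intro Y' hY' f' hf' A hA
    have hhalf : (0 : ENNReal) < 2⁻¹ := by norm_num
    have hpow : ∀ k : ℕ, (0 : ENNReal) < 2⁻¹ ^ k := fun k => ENNReal.pow_pos hhalf k
    choose Bq hBq hBqlt using fun k : ℕ =>
      hkey Y' hY' f' hf' A hA ((2 : ENNReal)⁻¹ ^ k) (hpow k)
    set B : Set X.carrier := ⋂ N, ⋃ k, ⋃ (_ : N ≤ k), Bq k with hBdef
    have hBmeas : MeasurableSet[MeasurableSpace.comap F Y.ms] B :=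
      MeasurableSet.iInter fun N => MeasurableSet.iUnion fun k =>
        MeasurableSet.iUnion fun _ => hBq k
    refine ⟨B, hBmeas, ?_⟩
    have h1 : X.μ (A \ B) = 0 := by
      have hdiff : A \ B = ⋃ N, A \ ⋃ k, ⋃ (_ : N ≤ k), Bq k := by
        rw [hBdef, Set.diff_iInter]
      rw [hdiff]
      refine measure_iUnion_null fun N => ?_
      have hle : ∀ m, N ≤ m → X.μ (A \ ⋃ k, ⋃ (_ : N ≤ k), Bq k) ≤ 2⁻¹ ^ m := by
        intro m hm
        refine le_trans (measure_mono ?_) (hBqlt m).le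
        intro x hx
        refine Set.mem_symmDiff.2 (Or.inl ⟨hx.1, fun hc => hx.2 ?_⟩)
        exact Set.mem_iUnion.2 ⟨m, Set.mem_iUnion.2 ⟨hm, hc⟩⟩
      have htend : Filter.Tendsto (fun m : ℕ => (2 : ENNReal)⁻¹ ^ m) Filter.atTop (nhds 0) :=
        ENNReal.tendsto_pow_atTop_nhds_zero_of_lt_one (by norm_num)
      have := ge_of_tendsto htend (Filter.eventually_atTop.2 ⟨N, hle⟩)
      exact le_antisymm this zero_le
    have h2 : X.μ (B \ A) = 0 := by
      have hle : ∀ N, X.μ (B \ A) ≤ 2⁻¹ ^ N * 2 := by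
        intro N
        have hsub2 : B \ A ⊆ ⋃ k, (Bq (N + k) \ A) := by
          intro x hx
          have := Set.mem_iInter.1 hx.1 N
          obtain ⟨k, hk⟩ := Set.mem_iUnion.1 this
          obtain ⟨hNk, hxk⟩ := Set.mem_iUnion.1 hk
          exact Set.mem_iUnion.2 ⟨k - N, by
            rw [Nat.add_sub_cancel' hNk]; exact ⟨hxk, hx.2⟩⟩
        calc X.μ (B \ A) ≤ ∑' k, X.μ (Bq (N + k) \ A) :=
              le_trans (measure_mono hsub2) (measure_iUnion_le _)
          _ ≤ ∑' k, (2 : ENNReal)⁻¹ ^ (N + k) := by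
              refine ENNReal.tsum_le_tsum fun k => ?_
              refine le_trans (measure_mono fun x hx =>
                Set.mem_symmDiff.2 (Or.inr ⟨hx.1, hx.2⟩)) (hBqlt (N + k)).le
          _ = 2⁻¹ ^ N * ∑' k, (2 : ENNReal)⁻¹ ^ k := by
              rw [← ENNReal.tsum_mul_left]
              exact tsum_congr fun k => (pow_add _ N k)
          _ = 2⁻¹ ^ N * 2 := by
              rw [ENNReal.tsum_geometric]
              norm_num
      have htend : Filter.Tendsto (fun N : ℕ => (2 : ENNReal)⁻¹ ^ N * 2) Filter.atTop (nhds 0) := by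
        have := ENNReal.Tendsto.mul_const
          (ENNReal.tendsto_pow_atTop_nhds_zero_of_lt_one
            (show (2 : ENNReal)⁻¹ < 1 by norm_num)) (Or.inr (by norm_num : (2 : ENNReal) ≠ ⊤))
        simpa using this
      exact le_antisymm (ge_of_tendsto htend (Filter.Eventually.of_forall hle)) zero_le
    rw [Set.symmDiff_def]
    exact measure_union_null h1 h2
  -- the defining predicate of the maximal invariant σ-algebra
  set P : Set X.carrier → Prop := fun A => MeasurableSet A ∧
      ∃ B, MeasurableSet[MeasurableSpace.comap F Y.ms] B ∧ X.μ (symmDiff A B) = 0 with hP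
  have hPempty : P ∅ :=
    ⟨MeasurableSet.empty, ∅, ⟨∅, MeasurableSet.empty, Set.preimage_empty⟩, by simp⟩
  have hPcompl : ∀ A, P A → P Aᶜ := by
    rintro A ⟨hA, B, hB, h0⟩
    exact ⟨hA.compl, Bᶜ, hB.compl, by rwa [compl_symmDiff_compl]⟩
  have hPiUnion : ∀ As : ℕ → Set X.carrier, (∀ n, P (As n)) → P (⋃ n, As n) := by
    intro As h
    choose hmeas B hB h0 using h
    refine ⟨MeasurableSet.iUnion hmeas, ⋃ n, B n, MeasurableSet.iUnion hB, ?_⟩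
    refine measure_mono_null ?_ (measure_iUnion_null h0)
    intro x hx
    rcases Set.mem_symmDiff.1 hx with ⟨hx1, hx2⟩ | ⟨hx1, hx2⟩
    · obtain ⟨n, hn⟩ := Set.mem_iUnion.1 hx1
      exact Set.mem_iUnion.2 ⟨n, Set.mem_symmDiff.2
        (Or.inl ⟨hn, fun hc => hx2 (Set.mem_iUnion.2 ⟨n, hc⟩)⟩)⟩
    · obtain ⟨n, hn⟩ := Set.mem_iUnion.1 hx1
      exact Set.mem_iUnion.2 ⟨n, Set.mem_symmDiff.2
        (Or.inr ⟨hn, fun hc => hx2 (Set.mem_iUnion.2 ⟨n, hc⟩)⟩)⟩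
  -- invariance of the predicate
  have hPinv : ∀ (g : G) (A : Set X.carrier), P A → P (X.act g ⁻¹' A) := by
    intro g A hA
    obtain ⟨hAmeas, Bfull, hBc, hAB⟩ := hA
    obtain ⟨B', hB', rfl⟩ := hBc
    refine ⟨hAmeas.preimage (X.preserves g).measurable,
      F ⁻¹' (Y.act g ⁻¹' B'), ⟨Y.act g ⁻¹' B', hB'.preimage (Y.preserves g).measurable, rfl⟩, ?_⟩
    have h1 : X.μ (symmDiff (X.act g ⁻¹' A) (X.act g ⁻¹' (F ⁻¹' B'))) = 0 := by
      rw [← Set.preimage_symmDiff,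
        (X.preserves g).measure_preimage (hAmeas.symmDiff (hFmeas hB')).nullMeasurableSet]
      exact hAB
    have h2 : X.μ (symmDiff (X.act g ⁻¹' (F ⁻¹' B')) (F ⁻¹' (Y.act g ⁻¹' B'))) = 0 := by
      refine measure_mono_null ?_ (ae_iff.1 (hFfac.2.2 g))
      intro x hx
      simp only [Set.mem_setOf_eq]
      intro heq
      rcases Set.mem_symmDiff.1 hx with ⟨hx1, hx2⟩ | ⟨hx1, hx2⟩
      · exact hx2 (by have h : F (X.act g x) ∈ B' := hx1; rw [heq] at h; exact h)
      · exact hx2 (by show F (X.act g x) ∈ B'; rw [heq]; exact hx1)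
    have h3 := measure_symmDiff_le (μ := X.μ) (X.act g ⁻¹' A) (X.act g ⁻¹' (F ⁻¹' B'))
      (F ⁻¹' (Y.act g ⁻¹' B'))
    rw [h1, h2, add_zero] at h3
    exact le_antisymm h3 zero_le
  have hPcomap : ∀ B : Set X.carrier, MeasurableSet[MeasurableSpace.comap F Y.ms] B → P B := by
    intro B hB
    refine ⟨?_, B, hB, by simp⟩
    obtain ⟨B', hB', rfl⟩ := hB
    exact hFmeas hB'
  have hPmax : ∀ Y' ∈ C, ∀ f' : X.carrier → Y'.carrier, IsFactorMap X Y' f' →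
      ∀ A : Set X.carrier, MeasurableSet[MeasurableSpace.comap f' Y'.ms] A →
      ∃ B, P B ∧ X.μ (symmDiff A B) = 0 := by
    intro Y' hY' f' hf' A hA
    obtain ⟨B, hB, h0⟩ := hnull Y' hY' f' hf' A hA
    have hAmeas : MeasurableSet A := by
      obtain ⟨A', hA', rfl⟩ := hA
      exact hf'.1 hA'
    exact ⟨A, ⟨hAmeas, B, hB, h0⟩, by simp⟩
  exact ⟨⟨P, hPempty, hPcompl, hPiUnion⟩, fun s hs => hs.1, hPinv,
    ⟨Y, hYC, F, hFfac, fun A hA => hA.2, fun B hB => ⟨B, hPcomap B hB, by simp⟩⟩, hPmax⟩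
end

section
/- Suppose q : H → G is a continuous homomorphism of locally compact second countable groups and 𝖢 is an idempotent class of H-systems. Then the image class q_*𝖢 := {G-systems X such that X^{q(·)} ∈ 𝖢} is an idempotent class of G-systems, and it is hereditary if 𝖢 is hereditary. -/
open MeasureTheory

variable (G : Type*) [Group G] [TopologicalSpace G] [MeasurableSpace G]

variable {G}

/-- The `H`-system `X^{q(·)}` obtained from a `G`-system `X` by composing the action with a
measurable homomorphism `q : H → G`. -/
def pullbackSystem {H G : Type*} [Group H] [TopologicalSpace H] [MeasurableSpace H]
    [Group G] [TopologicalSpace G] [MeasurableSpace G]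
    (q : H →* G) (hq : Measurable q) (X : GSystem G) : GSystem H where
  carrier := X.carrier
  μ := X.μ
  prob := X.prob
  act h := X.act (q h)
  act_one x := by rw [show q 1 = 1 from map_one q]; exact X.act_one x
  act_mul h h' x := by rw [show q (h * h') = q h * q h' from map_mul q h h']; exact X.act_mul _ _ x
  jointly_meas := X.jointly_meas.comp ((hq.comp measurable_fst).prodMk measurable_snd)
  preserves h := X.preserves (q h)


/-- Pulling back along `q` sends factor maps to factor maps. -/
lemma pullback_factorMap {H G : Type*} [Group H] [TopologicalSpace H] [MeasurableSpace H]
    [Group G] [TopologicalSpace G] [MeasurableSpace G]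
    (q : H →* G) (hq : Measurable q) {Y X : GSystem G} {f : Y.carrier → X.carrier}
    (hf : IsFactorMap Y X f) :
    IsFactorMap (pullbackSystem q hq Y) (pullbackSystem q hq X) f :=
  ⟨hf.1, hf.2.1, fun h => hf.2.2 (q h)⟩

/-- **Image classes are idempotent.**
If `q : H → G` is a continuous homomorphism of locally compact second countable groups and `𝖢`
is an idempotent class of `H`-systems, then the image class
`q_*𝖢 = {G-systems X : X^{q(·)} ∈ 𝖢}` is an idempotent class of `G`-systems, and it is
hereditary whenever `𝖢` is hereditary. -/
theorem image_of_idempotent_class_is_idempotent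
    {H : Type*} [Group H] [TopologicalSpace H] [IsTopologicalGroup H] [MeasurableSpace H]
    [BorelSpace H] [LocallyCompactSpace H] [SecondCountableTopology H]
    {G : Type*} [Group G] [TopologicalSpace G] [IsTopologicalGroup G] [MeasurableSpace G]
    [BorelSpace G] [LocallyCompactSpace G] [SecondCountableTopology G]
    (q : H →* G) (hq : Continuous q)
    (C : Set (GSystem H)) (hC : IsIdempotentClass C) :
    IsIdempotentClass {X : GSystem G | pullbackSystem q hq.measurable X ∈ C} ∧
    (IsHereditary C →
      IsHereditary {X : GSystem G | pullbackSystem q hq.measurable X ∈ C}) := by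
  constructor
  · constructor
    · rintro X hX Y ⟨f, g, hf, hg, h1, h2⟩
      exact hC.iso_closed _ hX _
        ⟨f, g, pullback_factorMap q hq.measurable hf, pullback_factorMap q hq.measurable hg, h1, h2⟩
    · intro ι _ Xs lam hlam hmem
      have hlam' : IsJoining (fun i => pullbackSystem q hq.measurable (Xs i)) lam :=
        ⟨hlam.1, hlam.2.1, fun h => hlam.2.2 (q h)⟩
      exact hC.joining_closed ι _ lam hlam' hmem
    · rintro Xs Z hmem ⟨π, h1, h2, h3⟩
      refine hC.invLim_closed (fun n => pullbackSystem q hq.measurable (Xs n)) _ hmem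
        ⟨π, fun n => pullback_factorMap q hq.measurable (h1 n), fun n => ?_, h3⟩
      obtain ⟨f, hf, hae⟩ := h2 n
      exact ⟨f, pullback_factorMap q hq.measurable hf, hae⟩
  · rintro hHer X hX Y ⟨f, hf⟩
    exact hHer _ hX _ ⟨f, pullback_factorMap q hq.measurable hf⟩
end

section
/- If 𝖢 is an idempotent class of G-systems, then its downward closure 𝖢̂ := {G-systems X : X is a factor of some member of 𝖢} is a hereditary idempotent class. -/
set_option linter.unusedSectionVars false
set_option maxHeartbeats 1000000

open MeasureTheory Set ProbabilityTheory
open scoped ENNReal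

section Boxes
variable {ι : Type*} {α : ι → Type*} [∀ i, MeasurableSpace (α i)]

lemma box_measurableSet (I : Finset ι) (t : ∀ i, Set (α i)) (ht : ∀ i, MeasurableSet (t i)) :
    MeasurableSet {y : ∀ i, α i | ∀ i ∈ I, y i ∈ t i} := by
  have : {y : ∀ i, α i | ∀ i ∈ I, y i ∈ t i} = ⋂ i ∈ I, (fun y : ∀ i, α i => y i) ⁻¹' t i := by
    ext y; simp
  rw [this]
  exact MeasurableSet.biInter I.countable_toSet
    (fun i _ => (measurable_pi_apply i) (ht i))

lemma measure_ext_of_boxes {μ ν : Measure (∀ i, α i)} [IsProbabilityMeasure μ]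
    [IsProbabilityMeasure ν]
    (h : ∀ (I : Finset ι) (t : ∀ i, Set (α i)), (∀ i, MeasurableSet (t i)) →
      μ {y | ∀ i ∈ I, y i ∈ t i} = ν {y | ∀ i ∈ I, y i ∈ t i}) : μ = ν := by
  classical
  set C : Set (Set (∀ i, α i)) :=
    {B | ∃ (I : Finset ι) (t : ∀ i, Set (α i)),
      (∀ i, MeasurableSet (t i)) ∧ B = {y | ∀ i ∈ I, y i ∈ t i}} with hC
  have hgen : (MeasurableSpace.pi : MeasurableSpace (∀ i, α i)) =
      MeasurableSpace.generateFrom C := by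
    refine le_antisymm ?_ ?_
    · rw [MeasurableSpace.pi]
      refine iSup_le fun i => ?_
      rw [MeasurableSpace.comap_le_iff_le_map]
      intro s hs
      refine MeasurableSpace.measurableSet_generateFrom ?_
      refine ⟨{i}, Function.update (fun j => (univ : Set (α j))) i s, ?_, ?_⟩
      · intro j
        rcases eq_or_ne j i with rfl | hj
        · simpa using hs
        · simp [Function.update_of_ne hj]
      · ext y; simp
    · refine MeasurableSpace.generateFrom_le ?_
      rintro B ⟨I, t, ht, rfl⟩
      exact box_measurableSet I t ht
  have hpi : IsPiSystem C := by
    rintro B₁ ⟨I₁, t₁, ht₁, rfl⟩ B₂ ⟨I₂, t₂, ht₂, rfl⟩ -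
    classical
    refine ⟨I₁ ∪ I₂, fun i => (if i ∈ I₁ then t₁ i else univ) ∩ (if i ∈ I₂ then t₂ i else univ),
      fun i => MeasurableSet.inter
        (by split <;> [exact ht₁ i; exact MeasurableSet.univ])
        (by split <;> [exact ht₂ i; exact MeasurableSet.univ]), ?_⟩
    ext y
    simp only [mem_inter_iff, mem_setOf_eq, Finset.mem_union]
    constructor
    · rintro ⟨h1, h2⟩ i _
      constructor
      · by_cases h : i ∈ I₁ <;> simp [h, h1 i]
      · by_cases h : i ∈ I₂ <;> simp [h, h2 i]
    · intro hy
      constructor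
      · intro i hi
        have := (hy i (Or.inl hi)).1
        simpa [hi] using this
      · intro i hi
        have := (hy i (Or.inr hi)).2
        simpa [hi] using this
  refine ext_of_generate_finite C hgen hpi ?_ (by simp)
  rintro B ⟨I, t, ht, rfl⟩
  exact h I t ht

end Boxes
open scoped ENNReal

section Noise

noncomputable def U01 : Measure ℝ := volume.restrict (Set.Ioc 0 1)

instance : IsProbabilityMeasure U01 := by
  constructor
  rw [U01, Measure.restrict_apply_univ, Real.volume_Ioc]
  norm_num

lemma measure_Iic_iInf (μ : Measure ℝ) [IsFiniteMeasure μ] (a : ℝ) :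
    μ (Iic a) = ⨅ n : ℕ, μ (Iic (a + 1 / (n + 1))) := by
  have hset : ⋂ n : ℕ, Iic (a + 1 / (n + 1 : ℝ)) = Iic a := by
    ext x
    simp only [mem_iInter, mem_Iic]
    constructor
    · intro h
      by_contra hx
      push_neg at hx
      obtain ⟨n, hn⟩ := exists_nat_one_div_lt (sub_pos.2 hx)
      have := h n
      linarith
    · intro h n
      have : (0 : ℝ) < 1 / (n + 1) := by positivity
      linarith
  rw [← hset]
  refine Directed.measure_iInter (fun n => measurableSet_Iic.nullMeasurableSet) ?_
    ⟨0, measure_ne_top _ _⟩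
  have hanti : Antitone fun n : ℕ => Iic (a + 1 / (n + 1 : ℝ)) := by
    intro m n hmn
    refine Iic_subset_Iic.2 ?_
    have h1 : ((m : ℝ) + 1) ≤ (n : ℝ) + 1 := by
      have := (Nat.cast_le (α := ℝ)).2 hmn; linarith
    have h2 : (0 : ℝ) < (m : ℝ) + 1 := by positivity
    have h3 : (1 : ℝ) / ((n : ℝ) + 1) ≤ 1 / ((m : ℝ) + 1) := one_div_le_one_div_of_le h2 h1
    linarith
  exact hanti.directed_ge

variable {α : Type*} [MeasurableSpace α]

open scoped Classical in
/-- The quantile transform of a Markov kernel into `ℝ`. -/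
noncomputable def qkernel (κ : Kernel α ℝ) : α × ℝ → ℝ := fun p =>
  if 0 < p.2 ∧ ∃ q : ℚ, ENNReal.ofReal p.2 ≤ κ p.1 (Iic (q : ℝ))
  then sInf {r : ℝ | ENNReal.ofReal p.2 ≤ κ p.1 (Iic r)} else 0

lemma qkernel_le_iff (κ : Kernel α ℝ) [IsMarkovKernel κ] {x : α} {u : ℝ} (hu : 0 < u)
    (hq : ∃ q : ℚ, ENNReal.ofReal u ≤ κ x (Iic (q : ℝ))) (a : ℝ) :
    sInf {r : ℝ | ENNReal.ofReal u ≤ κ x (Iic r)} ≤ a ↔ ENNReal.ofReal u ≤ κ x (Iic a) := by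
  set S := {r : ℝ | ENNReal.ofReal u ≤ κ x (Iic r)} with hS
  obtain ⟨q, hq⟩ := hq
  have hne : S.Nonempty := ⟨q, hq⟩
  have hmono : ∀ {r r' : ℝ}, r ≤ r' → r ∈ S → r' ∈ S := by
    intro r r' hrr' hr
    exact le_trans hr (measure_mono (Iic_subset_Iic.2 hrr'))
  have hbdd : BddBelow S := by
    have h0 : ⨅ n : ℕ, κ x (Iic (-(n : ℝ))) = 0 := by
      have : ⋂ n : ℕ, Iic (-(n : ℝ)) = ∅ := by
        ext r
        simp only [mem_iInter, mem_Iic, mem_empty_iff_false, iff_false, not_forall, not_le]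
        obtain ⟨n, hn⟩ := exists_nat_gt (-r)
        exact ⟨n, by linarith⟩
      rw [← Directed.measure_iInter (fun n => measurableSet_Iic.nullMeasurableSet)
        ?_ ⟨0, measure_ne_top _ _⟩, this, measure_empty]
      have hanti : Antitone fun n : ℕ => Iic (-(n : ℝ)) := fun m n hmn =>
        Iic_subset_Iic.2 (by exact_mod_cast neg_le_neg (by exact_mod_cast hmn : (m:ℝ) ≤ n))
      exact hanti.directed_ge
    have hupos : (0 : ℝ≥0∞) < ENNReal.ofReal u := by simpa using hu
    have : ∃ n : ℕ, κ x (Iic (-(n : ℝ))) < ENNReal.ofReal u := by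
      by_contra h
      push_neg at h
      have : ENNReal.ofReal u ≤ 0 := h0 ▸ le_iInf h
      exact absurd (lt_of_lt_of_le hupos this) (lt_irrefl _)
    obtain ⟨n, hn⟩ := this
    refine ⟨-(n : ℝ), fun r hr => ?_⟩
    by_contra hlt
    push_neg at hlt
    exact absurd (lt_of_le_of_lt (hmono hlt.le hr) hn) (lt_irrefl _)
  constructor
  · intro h
    rw [measure_Iic_iInf]
    refine le_iInf fun n => ?_
    have hpos : (0 : ℝ) < 1 / (n + 1) := by positivity
    have : sInf S < a + 1 / (n + 1) := lt_of_le_of_lt h (by linarith)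
    obtain ⟨r, hrS, hr⟩ := exists_lt_of_csInf_lt hne this
    exact hmono hr.le hrS
  · intro h
    exact csInf_le hbdd h

lemma measurable_qkernel (κ : Kernel α ℝ) [IsMarkovKernel κ] :
    Measurable (qkernel κ) := by
  have hD : MeasurableSet {p : α × ℝ |
      0 < p.2 ∧ ∃ q : ℚ, ENNReal.ofReal p.2 ≤ κ p.1 (Iic (q : ℝ))} := by
    have : {p : α × ℝ | 0 < p.2 ∧ ∃ q : ℚ, ENNReal.ofReal p.2 ≤ κ p.1 (Iic (q : ℝ))} =
        {p : α × ℝ | 0 < p.2} ∩ ⋃ q : ℚ, {p : α × ℝ | ENNReal.ofReal p.2 ≤ κ p.1 (Iic (q : ℝ))} := by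
      ext p; simp only [mem_setOf_eq, mem_inter_iff, mem_iUnion]
    rw [this]
    refine MeasurableSet.inter (measurable_snd measurableSet_Ioi) ?_
    refine MeasurableSet.iUnion fun q => ?_
    exact measurableSet_le (ENNReal.measurable_ofReal.comp measurable_snd)
      ((κ.measurable_coe measurableSet_Iic).comp measurable_fst)
  refine measurable_of_Iic fun a => ?_
  have : qkernel κ ⁻¹' Iic a =
      ({p : α × ℝ | 0 < p.2 ∧ ∃ q : ℚ, ENNReal.ofReal p.2 ≤ κ p.1 (Iic (q : ℝ))} ∩
        {p : α × ℝ | ENNReal.ofReal p.2 ≤ κ p.1 (Iic a)}) ∪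
      ({p : α × ℝ | 0 < p.2 ∧ ∃ q : ℚ, ENNReal.ofReal p.2 ≤ κ p.1 (Iic (q : ℝ))}ᶜ ∩
        (if (0:ℝ) ≤ a then univ else ∅)) := by
    ext p
    simp only [mem_preimage, mem_Iic, qkernel, mem_union, mem_inter_iff, mem_compl_iff,
      mem_setOf_eq]
    by_cases hp : 0 < p.2 ∧ ∃ q : ℚ, ENNReal.ofReal p.2 ≤ κ p.1 (Iic (q : ℝ))
    · rw [if_pos hp]
      simp only [hp, true_and, not_true_eq_false, false_and, or_false]
      exact qkernel_le_iff κ hp.1 hp.2 a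
    · rw [if_neg hp]
      simp only [hp, false_and, not_false_eq_true, true_and, false_or]
      by_cases ha : (0:ℝ) ≤ a <;> simp [ha]
  rw [this]
  refine MeasurableSet.union (hD.inter ?_) ((hD.compl).inter (by split <;> simp))
  exact measurableSet_le (ENNReal.measurable_ofReal.comp measurable_snd)
    ((κ.measurable_coe measurableSet_Iic).comp measurable_fst)

lemma map_qkernel (κ : Kernel α ℝ) [IsMarkovKernel κ] (x : α) :
    Measure.map (fun u => qkernel κ (x, u)) U01 = κ x := by
  have hmeasq : Measurable fun u => qkernel κ (x, u) :=
    (measurable_qkernel κ).comp (measurable_prodMk_left)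
  refine Measure.ext_of_Iic _ _ fun a => ?_
  rw [Measure.map_apply hmeasq measurableSet_Iic]
  set c : ℝ := (κ x (Iic a)).toReal with hc
  have hne : κ x (Iic a) ≠ ∞ := measure_ne_top _ _
  have hc0 : 0 ≤ c := ENNReal.toReal_nonneg
  have hc1 : c ≤ 1 := by
    rw [hc]
    exact ENNReal.toReal_le_of_le_ofReal zero_le_one (by simpa using prob_le_one)
  have hsub : ∀ u ∈ Ioo (0:ℝ) 1, (qkernel κ (x, u) ≤ a ↔ u ≤ c) := by
    intro u hu
    have hu0 : 0 < u := hu.1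
    have hq : ∃ q : ℚ, ENNReal.ofReal u ≤ κ x (Iic (q : ℝ)) := by
      have hsup : ⨆ n : ℕ, κ x (Iic (n : ℝ)) = 1 := by
        have : ⋃ n : ℕ, Iic ((n : ℝ)) = univ := by
          ext r
          simp only [mem_iUnion, mem_Iic, mem_univ, iff_true]
          obtain ⟨n, hn⟩ := exists_nat_gt r
          exact ⟨n, hn.le⟩
        rw [← Directed.measure_iUnion, this]
        · simp
        · exact Monotone.directed_le fun m n hmn => Iic_subset_Iic.2 (by exact_mod_cast hmn)
      have : ENNReal.ofReal u < 1 := by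
        rw [← ENNReal.ofReal_one]
        exact ENNReal.ofReal_lt_ofReal_iff_of_nonneg hu0.le |>.2 hu.2
      rw [← hsup] at this
      obtain ⟨n, hn⟩ := lt_iSup_iff.1 this
      exact ⟨n, hn.le⟩
    have hDp : 0 < u ∧ ∃ q : ℚ, ENNReal.ofReal u ≤ κ x (Iic (q : ℝ)) := ⟨hu0, hq⟩
    simp only [qkernel]
    rw [if_pos hDp, qkernel_le_iff κ hu0 hq a, hc, ← ENNReal.ofReal_le_iff_le_toReal hne]
  have hIoo : {u : ℝ | qkernel κ (x, u) ≤ a} ∩ Ioo 0 1 = Iic c ∩ Ioo 0 1 := by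
    ext u
    simp only [mem_inter_iff, mem_setOf_eq, mem_Iic]
    constructor
    · rintro ⟨h1, h2⟩; exact ⟨(hsub u h2).1 h1, h2⟩
    · rintro ⟨h1, h2⟩; exact ⟨(hsub u h2).2 h1, h2⟩
  have hIocIoo : ∀ s : Set ℝ, MeasurableSet s → volume (s ∩ Ioc (0:ℝ) 1) = volume (s ∩ Ioo (0:ℝ) 1) := by
    intro s hs
    have h1 : s ∩ Ioc (0:ℝ) 1 ⊆ (s ∩ Ioo (0:ℝ) 1) ∪ {1} := by
      rintro u ⟨hus, hu0, hu1⟩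
      rcases lt_or_eq_of_le hu1 with h | h
      · exact Or.inl ⟨hus, hu0, h⟩
      · exact Or.inr (by simp [h])
    have h2 : s ∩ Ioo (0:ℝ) 1 ⊆ s ∩ Ioc (0:ℝ) 1 :=
      inter_subset_inter_right s Ioo_subset_Ioc_self
    refine le_antisymm ?_ (measure_mono h2)
    calc volume (s ∩ Ioc (0:ℝ) 1) ≤ volume ((s ∩ Ioo (0:ℝ) 1) ∪ {1}) := measure_mono h1
      _ ≤ volume (s ∩ Ioo (0:ℝ) 1) + volume ({1} : Set ℝ) := measure_union_le _ _
      _ = volume (s ∩ Ioo (0:ℝ) 1) := by simp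
  have hQmeas : MeasurableSet {u : ℝ | qkernel κ (x, u) ≤ a} := hmeasq measurableSet_Iic
  have hpre : (fun u => qkernel κ (x, u)) ⁻¹' Iic a = {u : ℝ | qkernel κ (x, u) ≤ a} := rfl
  rw [hpre, U01, Measure.restrict_apply hQmeas, hIocIoo _ hQmeas, hIoo,
    ← hIocIoo _ measurableSet_Iic]
  have : Iic c ∩ Ioc (0:ℝ) 1 = Ioc 0 c := by
    ext u
    simp only [mem_inter_iff, mem_Iic, mem_Ioc]
    constructor
    · rintro ⟨h1, h2, h3⟩; exact ⟨h2, h1⟩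
    · rintro ⟨h1, h2⟩; exact ⟨h2, h1, le_trans h2 hc1⟩
  rw [this, Real.volume_Ioc, hc]
  rw [sub_zero, ENNReal.ofReal_toReal hne]

variable {β : Type*} [MeasurableSpace β] [StandardBorelSpace β] [Nonempty β]

lemma exists_noise (ν : Kernel α β) [IsMarkovKernel ν] :
    ∃ s : α × ℝ → β, Measurable s ∧ ∀ x, Measure.map (fun u => s (x, u)) U01 = ν x := by
  obtain ⟨e, he⟩ := exists_measurableEmbedding_real β
  obtain ⟨r, hr, hre⟩ := he.exists_measurable_extend measurable_id (fun _ => ‹Nonempty β›)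
  set κ : Kernel α ℝ := ν.map e with hκ
  have : IsMarkovKernel κ := by
    rw [hκ]; exact Kernel.IsMarkovKernel.map ν he.measurable
  refine ⟨fun p => r (qkernel κ p), hr.comp (measurable_qkernel κ), fun x => ?_⟩
  have hmeasq : Measurable fun u => qkernel κ (x, u) :=
    (measurable_qkernel κ).comp (measurable_prodMk_left)
  calc Measure.map (fun u => r (qkernel κ (x, u))) U01
      = Measure.map r (Measure.map (fun u => qkernel κ (x, u)) U01) :=
        (Measure.map_map hr hmeasq).symm
    _ = Measure.map r (κ x) := by rw [map_qkernel]
    _ = Measure.map r (Measure.map e (ν x)) := by rw [hκ, Kernel.map_apply _ he.measurable]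
    _ = Measure.map (r ∘ e) (ν x) := Measure.map_map hr he.measurable
    _ = ν x := by
        have : r ∘ e = id := hre
        rw [this, Measure.map_id]

end Noise
open scoped ENNReal

section Invariant

lemma invariant_prob_unique {K : Type*} [AddCommGroup K] [TopologicalSpace K]
    [IsTopologicalAddGroup K] [MeasurableSpace K] [BorelSpace K] [SecondCountableTopology K]
    (μ ν : Measure K) [IsProbabilityMeasure μ] [IsProbabilityMeasure ν]
    [μ.IsAddLeftInvariant] [ν.IsAddLeftInvariant] : μ = ν := by
  ext A hA
  have hmeas : Measurable fun p : K × K => A.indicator (fun _ => (1 : ℝ≥0∞)) (p.1 + p.2) :=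
    (measurable_indicator_const_iff 1 |>.2 hA).comp measurable_add
  have key : ∀ (μ' : Measure K), μ'.IsAddLeftInvariant → IsProbabilityMeasure μ' →
      ∀ y : K, ∫⁻ x, A.indicator (fun _ => (1 : ℝ≥0∞)) (x + y) ∂μ' = μ' A := by
    intro μ' hinv hprob y
    have : ∀ x : K, A.indicator (fun _ => (1 : ℝ≥0∞)) (x + y) =
        ((fun x : K => x + y) ⁻¹' A).indicator (fun _ => (1 : ℝ≥0∞)) x := by
      intro x; rfl
    simp_rw [this]
    rw [lintegral_indicator (by exact (measurable_add_const y) hA)]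
    simp only [lintegral_const, one_mul, Measure.restrict_apply_univ]
    have : (fun x : K => x + y) = (fun x : K => y + x) := by ext x; exact add_comm x y
    rw [this]
    exact measure_preimage_add μ' y A
  have h1 : ∫⁻ y, ∫⁻ x, A.indicator (fun _ => (1 : ℝ≥0∞)) (x + y) ∂μ ∂ν = μ A := by
    have : ∀ y : K, ∫⁻ x, A.indicator (fun _ => (1 : ℝ≥0∞)) (x + y) ∂μ = μ A :=
      key μ inferInstance inferInstance
    simp [this]
  have h2 : ∫⁻ x, ∫⁻ y, A.indicator (fun _ => (1 : ℝ≥0∞)) (x + y) ∂ν ∂μ = ν A := by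
    have : ∀ x : K, ∫⁻ y, A.indicator (fun _ => (1 : ℝ≥0∞)) (x + y) ∂ν = ν A := by
      intro x
      have := key ν inferInstance inferInstance x
      simpa [add_comm] using this
    simp [this]
  rw [← h1, lintegral_lintegral_swap, h2]
  exact (hmeas.comp measurable_swap).aemeasurable

end Invariant

section HaarBox

notation "𝕋" => AddCircle (1 : ℝ)

instance : IsProbabilityMeasure (volume : Measure 𝕋) :=
  ⟨by rw [AddCircle.measure_univ]; simp⟩

variable {ι : Type} [Countable ι]

noncomputable def haarP (ι : Type) [Countable ι] : Measure (ι → 𝕋) :=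
  Measure.addHaarMeasure ⊤

instance : IsProbabilityMeasure (haarP ι) :=
  ⟨by rw [haarP, ← TopologicalSpace.PositiveCompacts.coe_top, Measure.addHaarMeasure_self]⟩

instance : (haarP ι).IsAddLeftInvariant := by
  rw [haarP]; infer_instance

lemma haarP_box (I : Finset ι) (t : ι → Set 𝕋) (ht : ∀ i, MeasurableSet (t i)) :
    haarP ι {ω : ι → 𝕋 | ∀ i ∈ I, ω i ∈ t i} = ∏ i ∈ I, volume (t i) := by
  classical
  have hres : Measurable fun (ω : ι → 𝕋) (i : I) => ω i :=
    measurable_pi_iff.2 fun i => measurable_pi_apply _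
  set m : Measure (I → 𝕋) := Measure.map (fun (ω : ι → 𝕋) (i : I) => ω i) (haarP ι) with hm
  have : IsProbabilityMeasure m := Measure.isProbabilityMeasure_map hres.aemeasurable
  have hinv : m.IsAddLeftInvariant := by
    constructor
    intro t₀
    have hext : (fun (ω : ι → 𝕋) (i : I) => ω i) ∘
        (fun ω : ι → 𝕋 => (fun i => if h : i ∈ I then t₀ ⟨i, h⟩ else 0) + ω) =
        (fun p : I → 𝕋 => t₀ + p) ∘ (fun (ω : ι → 𝕋) (i : I) => ω i) := by
      ext ω i; simp [i.2]
    rw [hm, Measure.map_map (measurable_const_add t₀) hres, ← hext,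
      ← Measure.map_map hres (measurable_const_add _),
      Measure.IsAddLeftInvariant.map_add_left_eq_self (μ := haarP ι) _]
  have huniq : m = Measure.pi (fun _ : I => (volume : Measure 𝕋)) :=
    invariant_prob_unique _ _
  have hpre : (fun (ω : ι → 𝕋) (i : I) => ω i) ⁻¹' (univ.pi fun i : I => t i) =
      {ω : ι → 𝕋 | ∀ i ∈ I, ω i ∈ t i} := by
    ext ω; simp [Set.mem_pi]
  calc haarP ι {ω : ι → 𝕋 | ∀ i ∈ I, ω i ∈ t i}
      = m (univ.pi fun i : I => t i) := by
        rw [hm, Measure.map_apply hres (MeasurableSet.univ_pi fun i => ht i), hpre]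
    _ = ∏ i : I, volume (t i) := by rw [huniq, Measure.pi_pi]
    _ = ∏ i ∈ I, volume (t i) := Finset.prod_coe_sort I (fun i => volume (t i))

end HaarBox
open scoped ENNReal



noncomputable def circleRep : 𝕋 → ℝ := fun z => ((AddCircle.measurableEquivIoc 1 0) z : ℝ)

lemma measurable_circleRep : Measurable circleRep :=
  measurable_subtype_coe.comp (AddCircle.measurableEquivIoc 1 0).measurable

lemma map_circleRep : Measure.map circleRep volume = U01 := by
  have h1 : Measure.map ((↑·) : ℝ → 𝕋) (volume.restrict (Ioc (0:ℝ) (0 + 1))) = volume :=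
    (AddCircle.measurePreserving_mk 1 0).map_eq
  have h2 : Measure.map circleRep volume
      = Measure.map (circleRep ∘ ((↑·) : ℝ → 𝕋)) (volume.restrict (Ioc (0:ℝ) (0 + 1))) := by
    rw [← h1, Measure.map_map measurable_circleRep AddCircle.measurable_mk']
  rw [h2]
  have h3 : circleRep ∘ ((↑·) : ℝ → 𝕋) =ᵐ[volume.restrict (Ioc (0:ℝ) (0 + 1))] id := by
    refine (ae_restrict_iff' measurableSet_Ioc).2 (Filter.Eventually.of_forall fun x hx => ?_)
    have : circleRep ((x : ℝ) : 𝕋) = toIocMod (by norm_num : (0:ℝ) < 1) 0 x := by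
      simp only [circleRep, Function.comp_apply]
      congr 1
    rw [Function.comp_apply, this, (toIocMod_eq_self _).2 hx]
    rfl
  rw [Measure.map_congr h3, Measure.map_id, U01]
  norm_num
open scoped ENNReal

section Disint

variable {α β : Type*} [MeasurableSpace α] [StandardBorelSpace α]
  [MeasurableSpace β] [StandardBorelSpace β] [Nonempty β]

/-- The graph measure of `f` on `α × β`. -/
noncomputable def graphM (μ : Measure β) (f : β → α) : Measure (α × β) :=
  Measure.map (fun y => (f y, y)) μ

instance (μ : Measure β) [IsFiniteMeasure μ] (f : β → α) : IsFiniteMeasure (graphM μ f) := by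
  constructor
  rw [graphM]
  by_cases h : AEMeasurable (fun y => (f y, y)) μ
  · rw [Measure.map_apply_of_aemeasurable h MeasurableSet.univ]
    exact lt_of_le_of_lt (measure_mono (subset_univ _)) (measure_lt_top μ univ)
  · rw [Measure.map_of_not_aemeasurable h]
    simp

variable (μ : Measure β) [IsProbabilityMeasure μ] (f : β → α)

lemma graphM_fst (hf : Measurable f) : (graphM μ f).fst = Measure.map f μ := by
  rw [graphM, Measure.fst, Measure.map_map measurable_fst (hf.prodMk measurable_id : Measurable fun y => (f y, y))]
  rfl

lemma graphM_disint (hf : Measurable f) :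
    (Measure.map f μ) ⊗ₘ (graphM μ f).condKernel = graphM μ f := by
  conv_lhs => rw [← graphM_fst μ f hf]
  exact (graphM μ f).disintegrate _

lemma graphM_apply (hf : Measurable f) {s : Set (α × β)} (hs : MeasurableSet s) :
    graphM μ f s = μ {y | (f y, y) ∈ s} := by
  rw [graphM, Measure.map_apply (hf.prodMk measurable_id : Measurable fun y => (f y, y)) hs]
  rfl

lemma measurableSet_ne_graph (hf : Measurable f) : MeasurableSet {p : α × β | f p.2 ≠ p.1} := by
  obtain ⟨e, he⟩ := exists_measurableEmbedding_real α
  have : {p : α × β | f p.2 ≠ p.1} = {p : α × β | e (f p.2) = e p.1}ᶜ := by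
    ext p
    simp only [mem_compl_iff, mem_setOf_eq, not_iff_not]
    exact ⟨fun h => by rw [h], fun h => he.injective h⟩
  rw [this]
  exact (measurableSet_eq_fun (he.measurable.comp (hf.comp measurable_snd))
    (he.measurable.comp measurable_fst)).compl

lemma condKernel_graph_fiber (hf : Measurable f) :
    ∀ᵐ x ∂(Measure.map f μ), (graphM μ f).condKernel x {y | f y ≠ x} = 0 := by
  have hset := measurableSet_ne_graph (β := β) f hf
  have hint : ∫⁻ x, (graphM μ f).condKernel x {y | f y ≠ x} ∂(Measure.map f μ) = 0 := by
    have : ∀ x, {y : β | f y ≠ x} = Prod.mk x ⁻¹' {p : α × β | f p.2 ≠ p.1} := fun x => rfl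
    calc ∫⁻ x, (graphM μ f).condKernel x {y | f y ≠ x} ∂(Measure.map f μ)
        = (Measure.map f μ ⊗ₘ (graphM μ f).condKernel) {p : α × β | f p.2 ≠ p.1} :=
          (Measure.compProd_apply hset).symm
      _ = graphM μ f {p : α × β | f p.2 ≠ p.1} := by rw [graphM_disint μ f hf]
      _ = μ {y | f y ≠ f y} := graphM_apply μ f hf hset
      _ = 0 := by simp
  have hmeas : Measurable fun x => (graphM μ f).condKernel x {y | f y ≠ x} :=
    Kernel.measurable_kernel_prodMk_left hset
  rw [lintegral_eq_zero_iff hmeas] at hint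
  exact hint

lemma condKernel_graph_indicator (hf : Measurable f) {A : Set α} (hA : MeasurableSet A) :
    ∀ᵐ x ∂(Measure.map f μ),
      (graphM μ f).condKernel x (f ⁻¹' A) = A.indicator (fun _ => (1 : ℝ≥0∞)) x := by
  filter_upwards [condKernel_graph_fiber μ f hf] with x hx
  haveI : IsMarkovKernel (graphM μ f).condKernel := inferInstance
  have hfiber : (graphM μ f).condKernel x {y | f y = x} = 1 := by
    have hcompl : {y : β | f y = x} = {y : β | f y ≠ x}ᶜ := by ext y; simp
    have hms : MeasurableSet {y : β | f y ≠ x} := (hf (measurableSet_singleton x)).compl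
    rw [hcompl, measure_compl hms (measure_ne_top _ _), hx]
    simp
  by_cases hxA : x ∈ A
  · have h1 : (graphM μ f).condKernel x (f ⁻¹' A) ≤ 1 := prob_le_one
    have h2 : (1 : ℝ≥0∞) ≤ (graphM μ f).condKernel x (f ⁻¹' A) := by
      rw [← hfiber]
      exact measure_mono fun y hy => by simp only [mem_setOf_eq] at hy; simp [mem_preimage, hy, hxA]
    rw [le_antisymm h1 h2]
    simp [hxA]
  · have : (graphM μ f).condKernel x (f ⁻¹' A) ≤ 0 := by
      rw [← hx]
      exact measure_mono fun y hy => by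
        simp only [mem_preimage] at hy
        simp only [mem_setOf_eq]
        intro h
        exact hxA (h ▸ hy)
    simp only [le_zero_iff] at this
    rw [this]
    simp [hxA]

lemma condKernel_graph_equivariant (hf : Measurable f)
    (a : β → β) (ha : Measurable a) (hpa : MeasurePreserving a μ μ)
    (b b' : α → α) (hb : Measurable b) (hb' : Measurable b')
    (hpb : MeasurePreserving b (Measure.map f μ) (Measure.map f μ))
    (hbb' : ∀ x, b' (b x) = x)
    (hcomm : ∀ᵐ y ∂μ, f (a y) = b (f y)) :
    ∀ᵐ x ∂(Measure.map f μ),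
      ((graphM μ f).condKernel x).map a = (graphM μ f).condKernel (b x) := by
  set ν := (graphM μ f).condKernel with hν
  set η : Kernel α β := Kernel.map (ν.comap b' hb') a with hη
  haveI : IsMarkovKernel (ν.comap b' hb') := by
    constructor; intro x; exact ⟨by rw [Kernel.comap_apply]; simp⟩
  haveI : IsMarkovKernel η := by
    rw [hη]; exact Kernel.IsMarkovKernel.map _ ha
  have hηapp : ∀ x, η x = (ν (b' x)).map a := by
    intro x
    rw [hη, Kernel.map_apply _ ha, Kernel.comap_apply]
  have hclaim : graphM μ f = (graphM μ f).fst ⊗ₘ η := by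
    rw [graphM_fst μ f hf]
    refine Measure.ext fun s hs => ?_
    have hmk : ∀ x, MeasurableSet (Prod.mk x ⁻¹' s) := fun x => measurable_prodMk_left hs
    have hstep1 : (Measure.map f μ ⊗ₘ η) s
        = ∫⁻ x, ν (b' x) (a ⁻¹' (Prod.mk x ⁻¹' s)) ∂(Measure.map f μ) := by
      rw [Measure.compProd_apply hs]
      congr 1
      ext x
      rw [hηapp x, Measure.map_apply ha (hmk x)]
    have hstep2 : ∫⁻ x, ν (b' x) (a ⁻¹' (Prod.mk x ⁻¹' s)) ∂(Measure.map f μ)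
        = ∫⁻ t, ν t (a ⁻¹' (Prod.mk (b t) ⁻¹' s)) ∂(Measure.map f μ) := by
      have hmeasF : Measurable fun x => η x (Prod.mk x ⁻¹' s) :=
        Kernel.measurable_kernel_prodMk_left hs
      have hmeasF' : Measurable fun x => ν (b' x) (a ⁻¹' (Prod.mk x ⁻¹' s)) := by
        convert hmeasF using 1
        ext x
        rw [hηapp x, Measure.map_apply ha (hmk x)]
      rw [← hpb.lintegral_comp hmeasF']
      congr 1
      ext t
      rw [hbb' t]
    have hstep3 : ∫⁻ t, ν t (a ⁻¹' (Prod.mk (b t) ⁻¹' s)) ∂(Measure.map f μ)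
        = (Measure.map f μ ⊗ₘ ν) (Prod.map b a ⁻¹' s) := by
      rw [Measure.compProd_apply ((hb.prodMap ha) hs)]
      rfl
    have hstep4 : (Measure.map f μ ⊗ₘ ν) (Prod.map b a ⁻¹' s) = graphM μ f s := by
      rw [hν, graphM_disint μ f hf, graphM_apply μ f hf ((hb.prodMap ha) hs),
        graphM_apply μ f hf hs]
      have hae : {y | (f y, y) ∈ Prod.map b a ⁻¹' s} =ᵐ[μ] {y | (f (a y), a y) ∈ s} := by
        rw [Filter.eventuallyEq_set]
        filter_upwards [hcomm] with y hy
        simp only [mem_setOf_eq, mem_preimage, Prod.map_apply, hy]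
      rw [measure_congr hae]
      have : {y | (f (a y), a y) ∈ s} = a ⁻¹' {y | (f y, y) ∈ s} := rfl
      rw [this, hpa.measure_preimage]
      exact (((hf.prodMk measurable_id) hs).nullMeasurableSet)
    rw [hstep1, hstep2, hstep3, hstep4]
  have huniq := eq_condKernel_of_measure_eq_compProd η hclaim
  rw [graphM_fst μ f hf] at huniq
  have huniq' : ∀ᵐ x ∂(Measure.map f μ), η (b x) = ν (b x) :=
    ae_of_ae_map (p := fun t => η t = ν t) hpb.aemeasurable
      (by rw [hpb.map_eq]; exact huniq)
  filter_upwards [huniq'] with x hx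
  have : η (b x) = (ν x).map a := by rw [hηapp, hbb']
  rw [← hx, this]

end Disint



open MeasureTheory

variable (G : Type*) [Group G] [TopologicalSpace G] [MeasurableSpace G]

variable {G}

section Systems

variable {G : Type*} [Group G] [TopologicalSpace G] [MeasurableSpace G]

lemma GSystem.nonempty_carrier (X : GSystem G) : Nonempty X.carrier := by
  haveI := X.prob
  by_contra h
  rw [not_nonempty_iff] at h
  have h1 : X.μ univ = 1 := measure_univ
  rw [Set.univ_eq_empty_iff.2 h, measure_empty] at h1
  exact zero_ne_one h1

lemma factor_comp {Z Y X : GSystem G} {u : Z.carrier → Y.carrier} {v : Y.carrier → X.carrier}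
    (hu : IsFactorMap Z Y u) (hv : IsFactorMap Y X v) : IsFactorMap Z X (v ∘ u) := by
  obtain ⟨hum, humap, hueq⟩ := hu
  obtain ⟨hvm, hvmap, hveq⟩ := hv
  refine ⟨hvm.comp hum, ?_, ?_⟩
  · rw [← hvmap, ← humap, Measure.map_map hvm hum]
  · intro g
    have h2 : ∀ᵐ z ∂Z.μ, v (Y.act g (u z)) = X.act g (v (u z)) :=
      ae_of_ae_map (p := fun y => v (Y.act g y) = X.act g (v y)) hum.aemeasurable
        (by rw [humap]; exact hveq g)
    filter_upwards [hueq g, h2] with z hz1 hz2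
    simp only [Function.comp_apply, hz1, hz2]

lemma joining_lift {ι : Type} [Countable ι] (Xs Ys : ι → GSystem G)
    (f : ∀ i, (Ys i).carrier → (Xs i).carrier) (hf : ∀ i, IsFactorMap (Ys i) (Xs i) (f i))
    (lam : Measure (∀ i, (Xs i).carrier)) (hlam : IsJoining Xs lam) :
    ∃ (lam' : Measure (∀ i, (Ys i).carrier)) (hlam' : IsJoining Ys lam'),
      IsFactorMap (joinSystem Ys lam' hlam') (joinSystem Xs lam hlam)
        (fun y i => f i (y i)) := by
  classical
  haveI : ∀ i, IsProbabilityMeasure (Ys i).μ := fun i => (Ys i).prob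
  haveI : ∀ i, IsProbabilityMeasure (Xs i).μ := fun i => (Xs i).prob
  haveI hprob : IsProbabilityMeasure lam := hlam.1
  haveI : ∀ i, Nonempty (Ys i).carrier := fun i => (Ys i).nonempty_carrier
  have hfm : ∀ i, Measurable (f i) := fun i => (hf i).1
  have hgm : ∀ i, Measure.map (f i) (Ys i).μ = (Xs i).μ := fun i => (hf i).2.1
  set ν : ∀ i, Kernel (Xs i).carrier (Ys i).carrier :=
    fun i => (graphM (Ys i).μ (f i)).condKernel with hν
  haveI : ∀ i, IsMarkovKernel (ν i) := fun i => by rw [hν]; infer_instance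
  choose s hs1 hs2 using fun i => exists_noise (ν i)
  -- the lifted measure
  set T : (∀ i, (Xs i).carrier) × (ι → 𝕋) → ∀ i, (Ys i).carrier :=
    fun p i => s i (p.1 i, circleRep (p.2 i)) with hTdef
  have hT : Measurable T := measurable_pi_iff.2 fun i =>
    (hs1 i).comp (((measurable_pi_apply i).comp measurable_fst).prodMk
      (measurable_circleRep.comp ((measurable_pi_apply i).comp measurable_snd)))
  set lam' : Measure (∀ i, (Ys i).carrier) := Measure.map T (lam.prod (haarP ι)) with hlammdef
  haveI hprob' : IsProbabilityMeasure lam' := by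
    rw [hlammdef]; exact Measure.isProbabilityMeasure_map hT.aemeasurable
  -- pulling a.e. statements back through marginals of lam
  have hae_pull : ∀ (j : ι) (p : (Xs j).carrier → Prop),
      (∀ᵐ t ∂(Xs j).μ, p t) → ∀ᵐ x ∂lam, p (x j) := by
    intro j p hp
    refine ae_of_ae_map (f := fun x : ∀ i, (Xs i).carrier => x j) (p := p)
      (measurable_pi_apply j).aemeasurable ?_
    rw [hlam.2.1 j]; exact hp
  -- the cylinder computation
  have hcyl : ∀ (I : Finset ι) (B : ∀ i, Set (Ys i).carrier), (∀ i, MeasurableSet (B i)) →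
      lam' {y | ∀ i ∈ I, y i ∈ B i} = ∫⁻ x, ∏ i ∈ I, ν i (x i) (B i) ∂lam := by
    intro I B hB
    have hbox := box_measurableSet I B hB
    rw [hlammdef, Measure.map_apply hT hbox, Measure.prod_apply (hT hbox)]
    refine lintegral_congr fun x => ?_
    have hsec : Prod.mk x ⁻¹' (T ⁻¹' {y | ∀ i ∈ I, y i ∈ B i})
        = {ω : ι → 𝕋 | ∀ i ∈ I, ω i ∈ {z : 𝕋 | s i (x i, circleRep z) ∈ B i}} := rfl
    have htmeas : ∀ i, MeasurableSet {z : 𝕋 | s i (x i, circleRep z) ∈ B i} := by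
      intro i
      exact ((hs1 i).comp (measurable_const.prodMk measurable_circleRep)) (hB i)
    rw [hsec, haarP_box I _ htmeas]
    refine Finset.prod_congr rfl fun i _ => ?_
    have hsm : Measurable fun u : ℝ => s i (x i, u) := (hs1 i).comp measurable_prodMk_left
    calc volume {z : 𝕋 | s i (x i, circleRep z) ∈ B i}
        = (Measure.map circleRep volume) ((fun u : ℝ => s i (x i, u)) ⁻¹' B i) := by
          rw [Measure.map_apply measurable_circleRep (hsm (hB i))]; rfl
      _ = (Measure.map (fun u : ℝ => s i (x i, u)) U01) (B i) := by
          rw [map_circleRep, Measure.map_apply hsm (hB i)]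
      _ = ν i (x i) (B i) := by rw [hs2 i (x i)]
  -- marginals
  have hmarg : ∀ j, Measure.map (fun y : ∀ i, (Ys i).carrier => y j) lam' = (Ys j).μ := by
    intro j
    refine Measure.ext fun B hB => ?_
    rw [Measure.map_apply (measurable_pi_apply j) hB]
    have hset : (fun y : ∀ i, (Ys i).carrier => y j) ⁻¹' B =
        {y | ∀ i ∈ ({j} : Finset ι), y i ∈
          Function.update (fun i => (univ : Set (Ys i).carrier)) j B i} := by
      ext y
      simp only [mem_preimage, mem_setOf_eq, Finset.mem_singleton]
      constructor
      · rintro hy i rfl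
        rw [Function.update_self]; exact hy
      · intro hy
        have := hy j rfl
        rwa [Function.update_self] at this
    have hBmeas : ∀ i, MeasurableSet
        (Function.update (fun i => (univ : Set (Ys i).carrier)) j B i) := by
      intro i
      rcases eq_or_ne i j with rfl | hij
      · rwa [Function.update_self]
      · rw [Function.update_of_ne hij]; exact MeasurableSet.univ
    rw [hset, hcyl {j} _ hBmeas]
    simp only [Finset.prod_singleton, Function.update_self]
    have h1 : ∫⁻ x, ν j (x j) B ∂lam = ∫⁻ t, ν j t B ∂(Measure.map (fun x => x j) lam) :=
      (lintegral_map (Kernel.measurable_coe _ hB) (measurable_pi_apply j)).symm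
    rw [h1, hlam.2.1 j, ← hgm j]
    have h2 : ∫⁻ t, ν j t B ∂(Measure.map (f j) (Ys j).μ)
        = (Measure.map (f j) (Ys j).μ ⊗ₘ ν j) (univ ×ˢ B) := by
      rw [Measure.compProd_apply (MeasurableSet.univ.prod hB)]
      refine lintegral_congr fun t => ?_
      congr 1
      ext y; simp
    rw [h2, hν]
    rw [graphM_disint _ _ (hfm j), graphM_apply _ _ (hfm j) (MeasurableSet.univ.prod hB)]
    have : {y | (f j y, y) ∈ univ ×ˢ B} = B := by ext y; simp
    rw [this]
  -- pushforward under F is lam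
  have hFm : Measurable fun (y : ∀ i, (Ys i).carrier) (i : ι) => f i (y i) :=
    measurable_pi_iff.2 fun i => (hfm i).comp (measurable_pi_apply i)
  have hFmap : Measure.map (fun (y : ∀ i, (Ys i).carrier) (i : ι) => f i (y i)) lam' = lam := by
    haveI : IsProbabilityMeasure
        (Measure.map (fun (y : ∀ i, (Ys i).carrier) (i : ι) => f i (y i)) lam') :=
      Measure.isProbabilityMeasure_map hFm.aemeasurable
    refine measure_ext_of_boxes fun I t ht => ?_
    rw [Measure.map_apply hFm (box_measurableSet I t ht)]
    have hpre : (fun (y : ∀ i, (Ys i).carrier) (i : ι) => f i (y i)) ⁻¹'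
        {x | ∀ i ∈ I, x i ∈ t i} = {y | ∀ i ∈ I, y i ∈ (fun i => f i ⁻¹' t i) i} := rfl
    rw [hpre, hcyl I _ (fun i => (hfm i) (ht i))]
    have hae : ∀ᵐ x ∂lam, ∀ i, ν i (x i) (f i ⁻¹' t i)
        = (t i).indicator (fun _ => (1 : ℝ≥0∞)) (x i) := by
      refine ae_all_iff.2 fun i => hae_pull i
        (fun z => ν i z (f i ⁻¹' t i) = (t i).indicator (fun _ => (1 : ℝ≥0∞)) z) ?_
      rw [← hgm i]
      exact condKernel_graph_indicator _ _ (hfm i) (ht i)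
    have key : ∀ᵐ x ∂lam, ∏ i ∈ I, ν i (x i) (f i ⁻¹' t i)
        = ({x : ∀ i, (Xs i).carrier | ∀ i ∈ I, x i ∈ t i}).indicator
          (fun _ => (1 : ℝ≥0∞)) x := by
      filter_upwards [hae] with x hx
      by_cases hxm : ∀ i ∈ I, x i ∈ t i
      · rw [indicator_of_mem (show x ∈ {x : ∀ i, (Xs i).carrier | ∀ i ∈ I, x i ∈ t i} from hxm)]
        refine Finset.prod_eq_one fun i hi => ?_
        rw [hx i, indicator_of_mem (hxm i hi)]
      · rw [indicator_of_notMem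
          (show x ∉ {x : ∀ i, (Xs i).carrier | ∀ i ∈ I, x i ∈ t i} from hxm)]
        push_neg at hxm
        obtain ⟨i, hiI, hxi⟩ := hxm
        refine Finset.prod_eq_zero hiI ?_
        rw [hx i, indicator_of_notMem hxi]
    rw [lintegral_congr_ae key, lintegral_indicator (box_measurableSet I t ht)]
    simp
  -- invariance of lam'
  have hinv : ∀ g : G, Measure.map (fun (y : ∀ i, (Ys i).carrier) (i : ι) =>
      (Ys i).act g (y i)) lam' = lam' := by
    intro g
    have hag : ∀ i, Measurable ((Ys i).act g) := fun i => ((Ys i).preserves g).measurable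
    have haX : ∀ i, Measurable ((Xs i).act g) := fun i => ((Xs i).preserves g).measurable
    have hdg : Measurable fun (y : ∀ i, (Ys i).carrier) (i : ι) => (Ys i).act g (y i) :=
      measurable_pi_iff.2 fun i => (hag i).comp (measurable_pi_apply i)
    have hdgX : Measurable fun (x : ∀ i, (Xs i).carrier) (i : ι) => (Xs i).act g (x i) :=
      measurable_pi_iff.2 fun i => (haX i).comp (measurable_pi_apply i)
    haveI : IsProbabilityMeasure (Measure.map (fun (y : ∀ i, (Ys i).carrier) (i : ι) =>
        (Ys i).act g (y i)) lam') := Measure.isProbabilityMeasure_map hdg.aemeasurable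
    refine measure_ext_of_boxes fun I t ht => ?_
    rw [Measure.map_apply hdg (box_measurableSet I t ht)]
    have hpre : (fun (y : ∀ i, (Ys i).carrier) (i : ι) => (Ys i).act g (y i)) ⁻¹'
        {y | ∀ i ∈ I, y i ∈ t i} = {y | ∀ i ∈ I, y i ∈ (fun i => (Ys i).act g ⁻¹' t i) i} := rfl
    rw [hpre, hcyl I _ (fun i => (hag i) (ht i))]
    -- equivariance of the disintegration kernels
    have hD3 : ∀ i, ∀ᵐ z ∂(Xs i).μ, ((ν i) z).map ((Ys i).act g) = ν i ((Xs i).act g z) := by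
      intro i
      have hbb' : ∀ x, (Xs i).act g⁻¹ ((Xs i).act g x) = x := by
        intro x
        rw [← (Xs i).act_mul, inv_mul_cancel, (Xs i).act_one]
      have := condKernel_graph_equivariant (Ys i).μ (f i) (hfm i)
        ((Ys i).act g) (hag i) ((Ys i).preserves g)
        ((Xs i).act g) ((Xs i).act g⁻¹) (haX i) (((Xs i).preserves g⁻¹).measurable)
        (by rw [hgm i]; exact (Xs i).preserves g) hbb' ((hf i).2.2 g)
      rw [hgm i] at this
      exact this
    have hae : ∀ᵐ x ∂lam, ∀ i, ((ν i) (x i)).map ((Ys i).act g) = ν i ((Xs i).act g (x i)) :=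
      ae_all_iff.2 fun i => hae_pull i
        (fun z => (ν i z).map ((Ys i).act g) = ν i ((Xs i).act g z)) (hD3 i)
    have hstep : ∫⁻ x, ∏ i ∈ I, ν i (x i) ((Ys i).act g ⁻¹' t i) ∂lam
        = ∫⁻ x, ∏ i ∈ I, ν i ((Xs i).act g (x i)) (t i) ∂lam := by
      refine lintegral_congr_ae ?_
      filter_upwards [hae] with x hx
      refine Finset.prod_congr rfl fun i _ => ?_
      rw [← hx i, Measure.map_apply (hag i) (ht i)]
    rw [hstep]
    have hΦ : Measurable fun x : ∀ i, (Xs i).carrier => ∏ i ∈ I, ν i (x i) (t i) :=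
      Finset.measurable_prod _ fun i _ =>
        (Kernel.measurable_coe _ (ht i)).comp (measurable_pi_apply i)
    have hchg : ∫⁻ x, ∏ i ∈ I, ν i ((Xs i).act g (x i)) (t i) ∂lam
        = ∫⁻ x, ∏ i ∈ I, ν i (x i) (t i)
            ∂(Measure.map (fun (x : ∀ i, (Xs i).carrier) (i : ι) => (Xs i).act g (x i)) lam) := by
      rw [lintegral_map hΦ hdgX]
    rw [hchg, hlam.2.2 g, ← hcyl I t ht]
  refine ⟨lam', ⟨hprob', hmarg, hinv⟩, hFm, hFmap, ?_⟩
  intro g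
  have hae : ∀ᵐ y ∂lam', ∀ i, f i ((Ys i).act g (y i)) = (Xs i).act g (f i (y i)) := by
    refine ae_all_iff.2 fun i => ?_
    refine ae_of_ae_map (f := fun y : ∀ i, (Ys i).carrier => y i)
      (p := fun z => f i ((Ys i).act g z) = (Xs i).act g (f i z))
      (measurable_pi_apply i).aemeasurable ?_
    rw [hmarg i]
    exact (hf i).2.2 g
  filter_upwards [hae] with y hy
  funext i
  exact hy i

end Systems


lemma invlim_factor {Z : GSystem G} {Xs : ℕ → GSystem G} (hZ : IsInverseLimit Z Xs) :
    ∃ (lam : Measure (∀ n, (Xs n).carrier)) (hlam : IsJoining Xs lam),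
      IsFactorOf Z (joinSystem Xs lam hlam) := by
  classical
  obtain ⟨π, hπ, -, happrox⟩ := hZ
  haveI : IsProbabilityMeasure Z.μ := Z.prob
  haveI : ∀ n, IsProbabilityMeasure (Xs n).μ := fun n => (Xs n).prob
  haveI : Nonempty Z.carrier := Z.nonempty_carrier
  have hπm : ∀ n, Measurable (π n) := fun n => (hπ n).1
  have hπmap : ∀ n, Measure.map (π n) Z.μ = (Xs n).μ := fun n => (hπ n).2.1
  set Φ : Z.carrier → ∀ n, (Xs n).carrier := fun z n => π n z with hΦdef
  have hΦ : Measurable Φ := measurable_pi_iff.2 hπm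
  set lam : Measure (∀ n, (Xs n).carrier) := Measure.map Φ Z.μ with hlamdef
  haveI hlamprob : IsProbabilityMeasure lam := Measure.isProbabilityMeasure_map hΦ.aemeasurable
  have hmarg : ∀ n, Measure.map (fun x : ∀ n, (Xs n).carrier => x n) lam = (Xs n).μ := by
    intro n
    rw [hlamdef, Measure.map_map (measurable_pi_apply n) hΦ]
    exact hπmap n
  have hinv : ∀ g : G, Measure.map (fun (x : ∀ n, (Xs n).carrier) (n : ℕ) =>
      (Xs n).act g (x n)) lam = lam := by
    intro g
    have hdgX : Measurable fun (x : ∀ n, (Xs n).carrier) (n : ℕ) => (Xs n).act g (x n) :=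
      measurable_pi_iff.2 fun n => ((Xs n).preserves g).measurable.comp (measurable_pi_apply n)
    rw [hlamdef, Measure.map_map hdgX hΦ]
    have hae : ∀ᵐ z ∂Z.μ, ((fun (x : ∀ n, (Xs n).carrier) (n : ℕ) =>
        (Xs n).act g (x n)) ∘ Φ) z = (Φ ∘ Z.act g) z := by
      have h1 : ∀ᵐ z ∂Z.μ, ∀ n, π n (Z.act g z) = (Xs n).act g (π n z) :=
        ae_all_iff.2 fun n => (hπ n).2.2 g
      filter_upwards [h1] with z hz
      funext n
      exact (hz n).symm
    rw [Measure.map_congr hae, ← Measure.map_map hΦ (Z.preserves g).measurable,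
      (Z.preserves g).map_eq]
  have hjoin : IsJoining Xs lam := ⟨hlamprob, hmarg, hinv⟩
  -- construct the inverse point map
  obtain ⟨θ, hθ⟩ := exists_measurableEmbedding_real Z.carrier
  obtain ⟨σf, hσm, hσθ⟩ := hθ.exists_measurable_extend measurable_id (fun _ => inferInstance)
  set θ3 : Z.carrier → ℝ≥0∞ := fun z => ENNReal.ofReal (Real.exp (θ z)) with hθ3def
  have hθ3m : Measurable θ3 :=
    ENNReal.measurable_ofReal.comp (Real.measurable_exp.comp hθ.measurable)
  have hAq : ∀ q : ℚ, MeasurableSet (θ3 ⁻¹' Iic (ENNReal.ofReal q)) :=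
    fun q => hθ3m measurableSet_Iic
  have hsup : (⨆ n, MeasurableSpace.comap (π n) (Xs n).ms)
      = MeasurableSpace.comap Φ (MeasurableSpace.pi) := by
    have hpi : (MeasurableSpace.pi : MeasurableSpace (∀ n, (Xs n).carrier))
        = ⨆ n, MeasurableSpace.comap (fun x : ∀ n, (Xs n).carrier => x n) ((Xs n).ms) := rfl
    rw [hpi, MeasurableSpace.comap_iSup]
    congr 1
    funext n
    rw [MeasurableSpace.comap_comp]
    rfl
  have hex : ∀ q : ℚ, ∃ S : Set (∀ n, (Xs n).carrier), MeasurableSet S ∧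
      Z.μ (symmDiff (θ3 ⁻¹' Iic (ENNReal.ofReal q)) (Φ ⁻¹' S)) = 0 := by
    intro q
    obtain ⟨B, hBmeas, hBnull⟩ := happrox _ (hAq q)
    rw [hsup, MeasurableSpace.measurableSet_comap] at hBmeas
    obtain ⟨S, hS, rfl⟩ := hBmeas
    exact ⟨S, hS, hBnull⟩
  choose S hSmeas hSnull using hex
  set ψ0 : (∀ n, (Xs n).carrier) → ℝ≥0∞ :=
    fun w => ⨅ q : ℚ, (if w ∈ S q then ENNReal.ofReal q else ⊤) with hψ0def
  have hψ0m : Measurable ψ0 :=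
    Measurable.iInf fun q => Measurable.ite (hSmeas q) measurable_const measurable_const
  set r : (∀ n, (Xs n).carrier) → Z.carrier :=
    fun w => σf (Real.log (ψ0 w).toReal) with hrdef
  have hrm : Measurable r :=
    hσm.comp (Real.measurable_log.comp (ENNReal.measurable_toReal.comp hψ0m))
  -- a.e. inverse property
  have hN : Z.μ (⋃ q : ℚ, symmDiff (θ3 ⁻¹' Iic (ENNReal.ofReal q)) (Φ ⁻¹' S q)) = 0 :=
    measure_iUnion_null fun q => hSnull q
  have hrΦ : ∀ᵐ z ∂Z.μ, r (Φ z) = z := by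
    have hae := measure_eq_zero_iff_ae_notMem.1 hN
    filter_upwards [hae] with z hz
    have hiff : ∀ q : ℚ, Φ z ∈ S q ↔ θ3 z ≤ ENNReal.ofReal q := by
      intro q
      have hzq : z ∉ symmDiff (θ3 ⁻¹' Iic (ENNReal.ofReal q)) (Φ ⁻¹' S q) := by
        intro hzin
        exact hz (mem_iUnion.2 ⟨q, hzin⟩)
      rw [Set.mem_symmDiff] at hzq
      constructor
      · intro hin
        by_contra hnot
        exact hzq (Or.inr ⟨hin, hnot⟩)
      · intro hle
        by_contra hnot
        exact hzq (Or.inl ⟨hle, hnot⟩)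
    have hval : ψ0 (Φ z) = θ3 z := by
      rw [hψ0def]
      simp only
      have hcongr : ∀ q : ℚ, (if Φ z ∈ S q then ENNReal.ofReal (q:ℝ) else ⊤)
          = (if θ3 z ≤ ENNReal.ofReal q then ENNReal.ofReal (q:ℝ) else ⊤) := by
        intro q
        by_cases h : Φ z ∈ S q
        · rw [if_pos h, if_pos ((hiff q).1 h)]
        · rw [if_neg h, if_neg fun hc => h ((hiff q).2 hc)]
      rw [iInf_congr hcongr]
      refine le_antisymm ?_ (le_iInf fun q => ?_)
      · by_contra hlt
        push_neg at hlt
        have hne : θ3 z ≠ ⊤ := by rw [hθ3def]; exact ENNReal.ofReal_ne_top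
        obtain ⟨q, -, hq1, hq2⟩ := (ENNReal.lt_iff_exists_rat_btwn).1 hlt
        have hq1' : θ3 z ≤ ENNReal.ofReal (q:ℝ) := le_of_lt hq1
        have hq2' : ENNReal.ofReal (q:ℝ) < ⨅ q : ℚ,
            (if θ3 z ≤ ENNReal.ofReal q then ENNReal.ofReal (q:ℝ) else ⊤) := hq2
        have := iInf_le (fun q : ℚ => if θ3 z ≤ ENNReal.ofReal q then ENNReal.ofReal (q:ℝ) else ⊤) q
        rw [if_pos hq1'] at this
        exact absurd (lt_of_le_of_lt this hq2') (lt_irrefl _)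
      · split
        · next h => exact h
        · exact le_top
    rw [hrdef]
    simp only
    rw [hval, hθ3def]
    simp only
    rw [ENNReal.toReal_ofReal (Real.exp_pos _).le, Real.log_exp]
    exact congrFun hσθ z
  refine ⟨lam, hjoin, r, hrm, ?_, ?_⟩
  · show Measure.map r (Measure.map Φ Z.μ) = Z.μ
    rw [Measure.map_map hrm hΦ, Measure.map_congr (μ := Z.μ)
      (f := r ∘ Φ) (g := id) hrΦ, Measure.map_id]
  · intro g
    have hdgX : Measurable fun (x : ∀ n, (Xs n).carrier) (n : ℕ) => (Xs n).act g (x n) :=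
      measurable_pi_iff.2 fun n => ((Xs n).preserves g).measurable.comp (measurable_pi_apply n)
    have hms : MeasurableSet {w : ∀ n, (Xs n).carrier |
        r ((joinSystem Xs lam hjoin).act g w) = Z.act g (r w)} := by
      have : {w : ∀ n, (Xs n).carrier |
          r ((joinSystem Xs lam hjoin).act g w) = Z.act g (r w)}
          = {w : ∀ n, (Xs n).carrier |
            θ (r (fun n => (Xs n).act g (w n))) = θ (Z.act g (r w))} := by
        ext w
        simp only [mem_setOf_eq]
        exact ⟨fun h => by rw [show (fun n => (Xs n).act g (w n))
            = (joinSystem Xs lam hjoin).act g w from rfl, h],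
          fun h => hθ.injective h⟩
      rw [this]
      exact measurableSet_eq_fun (hθ.measurable.comp (hrm.comp hdgX))
        (hθ.measurable.comp ((Z.preserves g).measurable.comp hrm))
    show ∀ᵐ w ∂(Measure.map Φ Z.μ), r ((joinSystem Xs lam hjoin).act g w) = Z.act g (r w)
    refine (ae_map_iff hΦ.aemeasurable hms).2 ?_
    have h1 : ∀ᵐ z ∂Z.μ, ∀ n, π n (Z.act g z) = (Xs n).act g (π n z) :=
      ae_all_iff.2 fun n => (hπ n).2.2 g
    have h2 : ∀ᵐ z ∂Z.μ, r (Φ (Z.act g z)) = Z.act g z :=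
      ae_of_ae_map (f := Z.act g) (p := fun z => r (Φ z) = z)
        (Z.preserves g).aemeasurable (by rw [(Z.preserves g).map_eq]; exact hrΦ)
    filter_upwards [h1, h2, hrΦ] with z hz1 hz2 hz3
    have hcomp : (joinSystem Xs lam hjoin).act g (Φ z) = Φ (Z.act g z) := by
      funext n
      exact (hz1 n).symm
    show r ((joinSystem Xs lam hjoin).act g (Φ z)) = Z.act g (r (Φ z))
    rw [hcomp, hz2, hz3]

/-- **Downward closures of idempotent classes.**
If `𝖢` is an idempotent class of `G`-systems, then its downward closure
`𝖢̂ = {X : X is a factor of some member of 𝖢}` is a hereditary idempotent class. -/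
theorem downward_closure_is_hereditary_idempotent
    {G : Type*} [Group G] [TopologicalSpace G] [IsTopologicalGroup G] [MeasurableSpace G]
    [BorelSpace G] [LocallyCompactSpace G] [SecondCountableTopology G]
    (C : Set (GSystem G)) (hC : IsIdempotentClass C) :
    IsIdempotentClass {X : GSystem G | ∃ Y ∈ C, IsFactorOf X Y} ∧
    IsHereditary {X : GSystem G | ∃ Y ∈ C, IsFactorOf X Y} := by
  have hher : IsHereditary {X : GSystem G | ∃ Y ∈ C, IsFactorOf X Y} := by
    rintro X ⟨W, hW, u, hu⟩ Y ⟨v, hv⟩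
    exact ⟨W, hW, v ∘ u, factor_comp hu hv⟩
  have hjoinc : ∀ (ι : Type) [Countable ι], ∀ (Xs : ι → GSystem G)
      (lam : Measure (∀ i, (Xs i).carrier)) (hlam : IsJoining Xs lam),
      (∀ i, Xs i ∈ {X : GSystem G | ∃ Y ∈ C, IsFactorOf X Y}) →
      joinSystem Xs lam hlam ∈ {X : GSystem G | ∃ Y ∈ C, IsFactorOf X Y} := by
    intro ι _ Xs lam hlam hmem
    have hmem' : ∀ i, ∃ Y, Y ∈ C ∧ ∃ f, IsFactorMap Y (Xs i) f := fun i => by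
      obtain ⟨Y, hY, hfac⟩ := hmem i
      exact ⟨Y, hY, hfac⟩
    choose Ys hYsC hfac using hmem'
    choose fs hfs using hfac
    obtain ⟨lam', hlam', hF⟩ := joining_lift Xs Ys fs hfs lam hlam
    exact ⟨joinSystem Ys lam' hlam', hC.joining_closed ι Ys lam' hlam' hYsC, _, hF⟩
  refine ⟨⟨?_, hjoinc, ?_⟩, hher⟩
  · rintro X hX Y ⟨f, g, hf, hg, -, -⟩
    exact hher X hX Y ⟨f, hf⟩
  · intro Xs Z hmem hZinv
    obtain ⟨lam, hlam, hZfac⟩ := invlim_factor hZinv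
    exact hher _ (hjoinc ℕ Xs lam hlam hmem) Z hZfac
end

section
/- (Continuous-time van der Corput estimate.) Let u : [0, ∞) → ℌ be a bounded, strongly measurable map into a real Hilbert space ℌ. If the averages (1/S)∫₀^S (1/T)∫₀^T ⟨u(t+s), u(t)⟩ dt ds converge to 0 in the iterated limit T → ∞ and then S → ∞ (i.e. limsup_{S→∞} limsup_{T→∞} |(1/S)∫₀^S (1/T)∫₀^T ⟨u(t+s), u(t)⟩ dt ds| = 0), then the vector averages (1/T)∫₀^T u(t) dt converge to 0 in norm as T → ∞. Equivalently, if (1/T)∫₀^T u(t) dt does not tend to 0, then the iterated scalar averages do not tend to 0. -/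
open MeasureTheory Filter

open Set intervalIntegral RealInnerProductSpace


section prelim
variable {α E : Type*} [MeasurableSpace α]

lemma isFinite_restrict_Ioc (a b : ℝ) : IsFiniteMeasure (volume.restrict (Ioc a b)) := by
  constructor
  rw [Measure.restrict_apply_univ]
  exact measure_Ioc_lt_top

lemma integrable_of_bdd' [NormedAddCommGroup E] {μ : Measure α} [IsFiniteMeasure μ] {f : α → E}
    (hf : AEStronglyMeasurable f μ) {C : ℝ} (hb : ∀ x, ‖f x‖ ≤ C) : Integrable f μ :=
  (integrable_const C).mono' hf (Eventually.of_forall hb)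

lemma intervalIntegrable_of_bdd [NormedAddCommGroup E] {f : ℝ → E} (hm : StronglyMeasurable f)
    {C : ℝ} (hb : ∀ x, ‖f x‖ ≤ C) (a b : ℝ) : IntervalIntegrable f volume a b := by
  rw [intervalIntegrable_iff]
  haveI : IsFiniteMeasure (volume.restrict (Set.uIoc a b)) := isFinite_restrict_Ioc (a ⊓ b) (a ⊔ b)
  exact integrable_of_bdd' hm.aestronglyMeasurable hb

lemma norm_setInt_le [NormedAddCommGroup E] [NormedSpace ℝ E] {b : ℝ} (hb : 0 ≤ b) (f : ℝ → E)
    {C : ℝ} (h : ∀ x, ‖f x‖ ≤ C) : ‖∫ x in Ioc (0:ℝ) b, f x‖ ≤ C * b := by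
  haveI := isFinite_restrict_Ioc (0:ℝ) b
  have := MeasureTheory.norm_integral_le_of_norm_le_const (μ := volume.restrict (Ioc (0:ℝ) b))
    (f := f) (C := C) (Eventually.of_forall h)
  rwa [measureReal_restrict_apply_univ, Real.volume_real_Ioc_of_le hb, sub_zero] at this

lemma norm_setInt_le' {E : Type*} [NormedAddCommGroup E] [NormedSpace ℝ E] {b : ℝ} (hb : 0 ≤ b)
    (f : ℝ → E) {C : ℝ} (h : ∀ x ∈ Ioc (0:ℝ) b, ‖f x‖ ≤ C) :
    ‖∫ x in Ioc (0:ℝ) b, f x‖ ≤ C * b := by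
  haveI := isFinite_restrict_Ioc (0:ℝ) b
  have hae : ∀ᵐ x ∂(volume.restrict (Ioc (0:ℝ) b)), ‖f x‖ ≤ C :=
    (ae_restrict_mem measurableSet_Ioc).mono h
  have := MeasureTheory.norm_integral_le_of_norm_le_const (μ := volume.restrict (Ioc (0:ℝ) b))
    (f := f) (C := C) hae
  rwa [measureReal_restrict_apply_univ, Real.volume_real_Ioc_of_le hb, sub_zero] at this

end prelim

section core
variable {ℌ : Type*} [NormedAddCommGroup ℌ] [InnerProductSpace ℝ ℌ] [CompleteSpace ℌ]

variable (w : ℝ → ℌ)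

/-- inner correlation, unnormalized -/
noncomputable def qset (T r : ℝ) : ℝ := ∫ t in Ioc (0:ℝ) T, ⟪w (t + r), w t⟫

noncomputable def QQ (T σ : ℝ) : ℝ := ∫ r in (0:ℝ)..σ, qset w T r

variable {w} {C : ℝ}

lemma inner_bdd (hC : 0 ≤ C) (hw : ∀ t, ‖w t‖ ≤ C) (a b : ℝ) : |⟪w a, w b⟫| ≤ C ^ 2 := by
  calc |⟪w a, w b⟫| ≤ ‖w a‖ * ‖w b‖ := abs_real_inner_le_norm _ _
  _ ≤ C ^ 2 := by nlinarith [hw a, hw b, norm_nonneg (w a), norm_nonneg (w b)]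

lemma meas_qset (hm : StronglyMeasurable w) (T : ℝ) : StronglyMeasurable (qset w T) := by
  have h : StronglyMeasurable fun p : ℝ × ℝ => ⟪w (p.2 + p.1), w p.2⟫ :=
    (hm.comp_measurable (measurable_snd.add measurable_fst)).inner
      (hm.comp_measurable measurable_snd)
  exact h.integral_prod_right'

lemma abs_qset_le (hC : 0 ≤ C) (hw : ∀ t, ‖w t‖ ≤ C) {T : ℝ} (hT : 0 ≤ T) (r : ℝ) :
    |qset w T r| ≤ C ^ 2 * T := by
  have h := norm_setInt_le hT (fun t => ⟪w (t + r), w t⟫)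
    (fun t => by rw [Real.norm_eq_abs]; exact inner_bdd hC hw _ _)
  simpa [qset, Real.norm_eq_abs] using h

lemma qset_intervalIntegrable (hm : StronglyMeasurable w) (hC : 0 ≤ C) (hw : ∀ t, ‖w t‖ ≤ C) {T : ℝ} (hT : 0 ≤ T) (a b : ℝ) :
    IntervalIntegrable (qset w T) volume a b :=
  intervalIntegrable_of_bdd (meas_qset hm T) (fun r => abs_qset_le hC hw hT r) a b

lemma cont_QQ (hm : StronglyMeasurable w) (hC : 0 ≤ C) (hw : ∀ t, ‖w t‖ ≤ C) {T : ℝ} (hT : 0 ≤ T) : Continuous (QQ w T) :=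
  intervalIntegral.continuous_primitive (fun a b => qset_intervalIntegrable hm hC hw hT a b) 0

lemma abs_QQ_le (hC : 0 ≤ C) (hw : ∀ t, ‖w t‖ ≤ C) {T : ℝ} (hT : 0 ≤ T) {σ : ℝ} (hσ : 0 ≤ σ) :
    |QQ w T σ| ≤ C ^ 2 * T * σ := by
  have := intervalIntegral.norm_integral_le_of_norm_le_const (a := (0:ℝ)) (b := σ)
    (C := C ^ 2 * T) (f := qset w T) (fun r _ => abs_qset_le hC hw hT r)
  rwa [sub_zero, abs_of_nonneg hσ, Real.norm_eq_abs] at this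

lemma shift_split {E : Type*} [NormedAddCommGroup E] [NormedSpace ℝ E] {g : ℝ → E}
    (hg : ∀ a b : ℝ, IntervalIntegrable g volume a b) {K : ℝ} (hK : ∀ x, ‖g x‖ ≤ K)
    {T d : ℝ} (hd : 0 ≤ d) :
    ‖(∫ t in d..(T+d), g t) - ∫ t in (0:ℝ)..T, g t‖ ≤ 2 * d * K := by
  have a1 := integral_add_adjacent_intervals (hg 0 d) (hg d (T+d))
  have a2 := integral_add_adjacent_intervals (hg 0 T) (hg T (T+d))
  have e : (∫ t in d..(T+d), g t) - ∫ t in (0:ℝ)..T, g t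
      = (∫ t in T..(T+d), g t) - ∫ t in (0:ℝ)..d, g t := by
    have h := a1.trans a2.symm
    have h2 : (∫ t in d..(T+d), g t)
        = (∫ t in (0:ℝ)..T, g t) + (∫ t in T..(T+d), g t) - ∫ t in (0:ℝ)..d, g t := by
      rw [← h]; abel
    rw [h2]; abel
  rw [e]
  have b1 : ‖∫ t in T..(T+d), g t‖ ≤ K * d := by
    have := intervalIntegral.norm_integral_le_of_norm_le_const (a := T) (b := T+d) (C := K)
      (f := g) (fun x _ => hK x)
    simpa [abs_of_nonneg hd] using this
  have b2 : ‖∫ t in (0:ℝ)..d, g t‖ ≤ K * d := by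
    have := intervalIntegral.norm_integral_le_of_norm_le_const (a := (0:ℝ)) (b := d) (C := K)
      (f := g) (fun x _ => hK x)
    simpa [abs_of_nonneg hd] using this
  calc ‖(∫ t in T..(T+d), g t) - ∫ t in (0:ℝ)..d, g t‖
      ≤ ‖∫ t in T..(T+d), g t‖ + ‖∫ t in (0:ℝ)..d, g t‖ := norm_sub_le _ _
  _ ≤ 2 * d * K := by linarith

lemma shift_vec {w : ℝ → ℌ} {C : ℝ} (hm : StronglyMeasurable w) (hw : ∀ t, ‖w t‖ ≤ C)
    {T s : ℝ} (hs : 0 ≤ s) :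
    ‖(∫ t in (0:ℝ)..T, w (t+s)) - ∫ t in (0:ℝ)..T, w t‖ ≤ 2 * s * C := by
  have h1 : (∫ t in (0:ℝ)..T, w (t+s)) = ∫ t in s..(T+s), w t := by
    simpa using integral_comp_add_right w s (a := 0) (b := T)
  rw [h1]
  exact shift_split (intervalIntegrable_of_bdd hm hw) hw hs

lemma psi_le {w : ℝ → ℌ} {C : ℝ} (hm : StronglyMeasurable w) (hC : 0 ≤ C)
    (hw : ∀ t, ‖w t‖ ≤ C) {T : ℝ} (hT : 0 ≤ T) {s s' : ℝ} (h0 : 0 ≤ s') (h1 : s' ≤ s) :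
    (∫ t in Ioc (0:ℝ) T, ⟪w (t+s), w (t+s')⟫) ≤ qset w T (s - s') + 2 * s' * C ^ 2 := by
  set g : ℝ → ℝ := fun τ => ⟪w (τ + (s - s')), w τ⟫ with hg
  have hgm : StronglyMeasurable g :=
    (hm.comp_measurable (measurable_add_const _)).inner hm
  have hgb : ∀ x, ‖g x‖ ≤ C ^ 2 := fun x => by
    rw [Real.norm_eq_abs]; exact inner_bdd hC hw _ _
  have e1 : (∫ t in Ioc (0:ℝ) T, ⟪w (t+s), w (t+s')⟫) = ∫ t in s'..(T+s'), g t := by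
    rw [← integral_of_le hT]
    have h := integral_comp_add_right g s' (a := 0) (b := T)
    rw [zero_add] at h
    rw [← h]
    apply intervalIntegral.integral_congr
    intro t _
    simp only [hg]
    rw [show t + s' + (s - s') = t + s by ring]
  have e2 : qset w T (s - s') = ∫ t in (0:ℝ)..T, g t := by
    rw [qset, ← integral_of_le hT]
  rw [e1, e2]
  have := shift_split (g := g) (intervalIntegrable_of_bdd hgm hgb) hgb (T := T) h0
  have h3 : (∫ t in s'..(T+s'), g t) - (∫ t in (0:ℝ)..T, g t) ≤ 2 * s' * C ^ 2 :=
    (le_abs_self _).trans (by rwa [← Real.norm_eq_abs])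
  linarith

set_option maxHeartbeats 1000000 in
lemma sq_avg_le {w : ℝ → ℌ} {C : ℝ} (hm : StronglyMeasurable w) (hC : 0 ≤ C)
    (hw : ∀ t, ‖w t‖ ≤ C) {S T : ℝ} (hS : 0 < S) (hT : 0 < T) :
    ‖(1/T) • ∫ t in (0:ℝ)..T, w t‖^2 ≤
      (2/(S^2*T)) * (∫ σ in (0:ℝ)..S, QQ w T σ) + 6*S*C^2/T + (2*S*C/T)^2 := by
  haveI := isFinite_restrict_Ioc (0:ℝ) S
  haveI := isFinite_restrict_Ioc (0:ℝ) T
  set J : ℝ := ∫ σ in (0:ℝ)..S, QQ w T σ with hJ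
  set A : ℌ := ∫ t in (0:ℝ)..T, w t with hA
  set v : ℝ → ℌ := fun t => ∫ s in Ioc (0:ℝ) S, w (t+s) with hv
  set B : ℌ := ∫ t in Ioc (0:ℝ) T, v t with hB
  have hvm : StronglyMeasurable v :=
    (hm.comp_measurable (measurable_fst.add measurable_snd)).integral_prod_right'
  have hvb : ∀ t, ‖v t‖ ≤ C*S := fun t => norm_setInt_le hS.le _ (fun s => hw _)
  set Vf : ℝ → ℌ := fun s => ∫ t in Ioc (0:ℝ) T, w (t+s) with hVf
  have hVm : StronglyMeasurable Vf :=
    (hm.comp_measurable (measurable_snd.add measurable_fst)).integral_prod_right'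
  have hVb : ∀ s, ‖Vf s‖ ≤ C*T := fun s => norm_setInt_le hT.le _ (fun t => hw _)
  -- Fubini
  have hFub : ∫ s in Ioc (0:ℝ) S, Vf s = B := by
    have hint : Integrable (Function.uncurry fun s t => w (t+s))
        ((volume.restrict (Ioc (0:ℝ) S)).prod (volume.restrict (Ioc (0:ℝ) T))) :=
      integrable_of_bdd' ((hm.comp_measurable
        (measurable_snd.add measurable_fst)).aestronglyMeasurable) (fun x => hw _)
    exact integral_integral_swap hint
  -- comparison of A with its window average
  have hAB : ‖S • A - B‖ ≤ 2*S^2*C := by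
    have hconst : ∫ _s in Ioc (0:ℝ) S, A = S • A := by
      rw [setIntegral_const, Real.volume_real_Ioc_of_le hS.le, sub_zero]
    have hVint : Integrable Vf (volume.restrict (Ioc (0:ℝ) S)) :=
      integrable_of_bdd' hVm.aestronglyMeasurable hVb
    have hsub : S • A - B = ∫ s in Ioc (0:ℝ) S, (A - Vf s) := by
      rw [integral_sub (integrable_const A) hVint, hconst, hFub]
    rw [hsub]
    have hbd : ∀ s ∈ Ioc (0:ℝ) S, ‖A - Vf s‖ ≤ 2*S*C := by
      intro s hs
      have h1 : Vf s = ∫ t in (0:ℝ)..T, w (t+s) := (integral_of_le hT.le).symm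
      have h2 : ‖A - Vf s‖ ≤ 2*s*C := by
        rw [h1, norm_sub_rev]; exact shift_vec hm hw (T := T) hs.1.le
      nlinarith [hs.1.le, hs.2, hC]
    calc ‖∫ s in Ioc (0:ℝ) S, (A - Vf s)‖ ≤ (2*S*C) * S :=
      norm_setInt_le' hS.le _ hbd
    _ = 2*S^2*C := by ring
  -- variance inequality
  have hvar : ‖B‖^2 ≤ T * ∫ t in Ioc (0:ℝ) T, ‖v t‖^2 := by
    set c : ℌ := (1/T) • B with hc
    have hvint : Integrable v (volume.restrict (Ioc (0:ℝ) T)) :=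
      integrable_of_bdd' hvm.aestronglyMeasurable hvb
    have hm2 : StronglyMeasurable fun t => ‖v t‖^2 := by
      have := hvm.norm.mul hvm.norm
      exact (continuous_pow 2).comp_stronglyMeasurable hvm.norm
    have hI1 : Integrable (fun t => ‖v t‖^2) (volume.restrict (Ioc (0:ℝ) T)) :=
      integrable_of_bdd' (C := (C*S)^2) hm2.aestronglyMeasurable
        (fun t => by
          rw [Real.norm_eq_abs, abs_of_nonneg (sq_nonneg _)]
          exact pow_le_pow_left₀ (norm_nonneg _) (hvb t) 2)
    have hI2 : Integrable (fun t => ⟪v t, c⟫) (volume.restrict (Ioc (0:ℝ) T)) :=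
      integrable_of_bdd' (C := C*S*‖c‖)
        ((hvm.inner stronglyMeasurable_const).aestronglyMeasurable)
        (fun t => by
          rw [Real.norm_eq_abs]
          calc |⟪v t, c⟫| ≤ ‖v t‖ * ‖c‖ := abs_real_inner_le_norm _ _
          _ ≤ C*S*‖c‖ := mul_le_mul_of_nonneg_right (hvb t) (norm_nonneg c))
    have h0 : 0 ≤ ∫ t in Ioc (0:ℝ) T, ‖v t - c‖^2 :=
      integral_nonneg (fun t => sq_nonneg _)
    have hexp : ∫ t in Ioc (0:ℝ) T, ‖v t - c‖^2
        = (∫ t in Ioc (0:ℝ) T, ‖v t‖^2) - 2*(∫ t in Ioc (0:ℝ) T, ⟪v t, c⟫) + T*‖c‖^2 := by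
      have e : (fun t => ‖v t - c‖^2)
          = fun t => (‖v t‖^2 - 2*⟪v t, c⟫) + ‖c‖^2 :=
        funext fun t => by rw [norm_sub_sq_real]
      have g1 : Integrable (fun t => ‖v t‖^2 - 2*⟪v t, c⟫) (volume.restrict (Ioc (0:ℝ) T)) :=
        hI1.sub (hI2.const_mul 2)
      have g2 : Integrable (fun t => 2*⟪v t, c⟫) (volume.restrict (Ioc (0:ℝ) T)) :=
        hI2.const_mul 2
      rw [e, integral_add g1 (integrable_const _), integral_sub hI1 g2,
        MeasureTheory.integral_const_mul, setIntegral_const,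
        Real.volume_real_Ioc_of_le hT.le, sub_zero, smul_eq_mul]
    have hinner : ∫ t in Ioc (0:ℝ) T, ⟪v t, c⟫ = (1/T)*‖B‖^2 := by
      have e : (fun t => ⟪v t, c⟫) = fun t => ⟪c, v t⟫ :=
        funext fun t => real_inner_comm c (v t)
      rw [e, integral_inner hvint, ← hB, hc, real_inner_smul_left,
        real_inner_self_eq_norm_sq]
    have hcn : ‖c‖^2 = (1/T)^2*‖B‖^2 := by
      rw [hc, norm_smul, mul_pow, Real.norm_eq_abs, abs_of_pos (by positivity)]
    rw [hexp, hinner, hcn] at h0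
    have hTT : T*((1/T)^2*‖B‖^2) = (1/T)*‖B‖^2 := by field_simp
    rw [hTT] at h0
    have key : (1/T)*‖B‖^2 ≤ ∫ t in Ioc (0:ℝ) T, ‖v t‖^2 := by linarith
    calc ‖B‖^2 = T * ((1/T)*‖B‖^2) := by field_simp
    _ ≤ T * ∫ t in Ioc (0:ℝ) T, ‖v t‖^2 := mul_le_mul_of_nonneg_left key hT.le
  -- expansion of ‖v t‖² as a double integral
  have hvt : ∀ t : ℝ, ‖v t‖^2
      = ∫ s in Ioc (0:ℝ) S, ∫ s' in Ioc (0:ℝ) S, ⟪w (t+s), w (t+s')⟫ := by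
    intro t
    have hws : Integrable (fun s => w (t+s)) (volume.restrict (Ioc (0:ℝ) S)) :=
      integrable_of_bdd' ((hm.comp_measurable (measurable_const_add t)).aestronglyMeasurable) (fun x => hw _)
    have e1 : ⟪v t, v t⟫ = ∫ s in Ioc (0:ℝ) S, ⟪v t, w (t+s)⟫ :=
      (integral_inner hws (v t)).symm
    have e2 : ∀ s : ℝ, ⟪v t, w (t+s)⟫ = ∫ s' in Ioc (0:ℝ) S, ⟪w (t+s), w (t+s')⟫ := by
      intro s
      rw [real_inner_comm (w (t+s)) (v t)]
      exact (integral_inner hws (w (t+s))).symm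
    rw [← real_inner_self_eq_norm_sq, e1]
    exact integral_congr_ae (Eventually.of_forall e2)
  -- swap the t integral inside
  set Ψ : ℝ → ℝ → ℝ := fun s s' => ∫ t in Ioc (0:ℝ) T, ⟪w (t+s), w (t+s')⟫ with hΨ
  have hdouble : ∫ t in Ioc (0:ℝ) T, ‖v t‖^2
      = ∫ s in Ioc (0:ℝ) S, ∫ s' in Ioc (0:ℝ) S, Ψ s s' := by
    have hmF : StronglyMeasurable (Function.uncurry fun t s =>
        ∫ s' in Ioc (0:ℝ) S, ⟪w (t+s), w (t+s')⟫) := by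
      apply StronglyMeasurable.integral_prod_right'
        (f := fun q : (ℝ × ℝ) × ℝ => ⟪w (q.1.1+q.1.2), w (q.1.1+q.2)⟫)
      exact (hm.comp_measurable ((measurable_fst.comp measurable_fst).add
          (measurable_snd.comp measurable_fst))).inner
        (hm.comp_measurable ((measurable_fst.comp measurable_fst).add measurable_snd))
    have hint1 : Integrable (Function.uncurry fun t s =>
        ∫ s' in Ioc (0:ℝ) S, ⟪w (t+s), w (t+s')⟫)
        ((volume.restrict (Ioc (0:ℝ) T)).prod (volume.restrict (Ioc (0:ℝ) S))) := by
      apply integrable_of_bdd' (C := C^2*S) hmF.aestronglyMeasurable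
      rintro ⟨t, s⟩
      exact norm_setInt_le hS.le _
        (fun s' => by rw [Real.norm_eq_abs]; exact inner_bdd hC hw _ _)
    have hsw1 := integral_integral_swap hint1
    have hsw2 : ∀ s : ℝ, (∫ t in Ioc (0:ℝ) T, ∫ s' in Ioc (0:ℝ) S, ⟪w (t+s), w (t+s')⟫)
        = ∫ s' in Ioc (0:ℝ) S, Ψ s s' := by
      intro s
      have hmg : StronglyMeasurable (Function.uncurry fun t s' => ⟪w (t+s), w (t+s')⟫) :=
        (hm.comp_measurable (measurable_fst.add measurable_const)).inner
          (hm.comp_measurable (measurable_fst.add measurable_snd))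
      have hint2 : Integrable (Function.uncurry fun t s' => ⟪w (t+s), w (t+s')⟫)
          ((volume.restrict (Ioc (0:ℝ) T)).prod (volume.restrict (Ioc (0:ℝ) S))) :=
        integrable_of_bdd' (C := C^2) hmg.aestronglyMeasurable
          (fun p => by rw [Real.norm_eq_abs]; exact inner_bdd hC hw _ _)
      exact integral_integral_swap hint2
    calc ∫ t in Ioc (0:ℝ) T, ‖v t‖^2
        = ∫ t in Ioc (0:ℝ) T, ∫ s in Ioc (0:ℝ) S, ∫ s' in Ioc (0:ℝ) S, ⟪w (t+s), w (t+s')⟫ :=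
          integral_congr_ae (Eventually.of_forall hvt)
    _ = ∫ s in Ioc (0:ℝ) S, ∫ t in Ioc (0:ℝ) T, ∫ s' in Ioc (0:ℝ) S, ⟪w (t+s), w (t+s')⟫ := hsw1
    _ = ∫ s in Ioc (0:ℝ) S, ∫ s' in Ioc (0:ℝ) S, Ψ s s' :=
          integral_congr_ae (Eventually.of_forall hsw2)
  -- symmetry and measurability of Ψ
  have hΨsymm : ∀ s s', Ψ s s' = Ψ s' s := fun s s' =>
    integral_congr_ae (Eventually.of_forall fun t => real_inner_comm (w (t+s')) (w (t+s)))
  have hΨb : ∀ s s', |Ψ s s'| ≤ C^2*T := by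
    intro s s'
    have := norm_setInt_le hT.le (fun t => ⟪w (t+s), w (t+s')⟫)
      (fun t => by rw [Real.norm_eq_abs]; exact inner_bdd hC hw _ _)
    rwa [Real.norm_eq_abs] at this
  have hΨm1 : ∀ s, StronglyMeasurable (fun s' => Ψ s s') := fun s =>
    StronglyMeasurable.integral_prod_right'
      (f := fun q : ℝ × ℝ => ⟪w (q.2+s), w (q.2+q.1)⟫)
      ((hm.comp_measurable (measurable_snd.add measurable_const)).inner
        (hm.comp_measurable (measurable_snd.add measurable_fst)))
  have hΨm2 : ∀ s, StronglyMeasurable (fun s' => Ψ s' s) := fun s =>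
    StronglyMeasurable.integral_prod_right'
      (f := fun q : ℝ × ℝ => ⟪w (q.2+q.1), w (q.2+s)⟫)
      ((hm.comp_measurable (measurable_snd.add measurable_fst)).inner
        (hm.comp_measurable (measurable_snd.add measurable_const)))
  have hqii : ∀ a b : ℝ, IntervalIntegrable (qset w T) volume a b :=
    qset_intervalIntegrable hm hC hw hT.le
  -- row bound
  have hrow : ∀ s ∈ Icc (0:ℝ) S,
      (∫ s' in Ioc (0:ℝ) S, Ψ s s') ≤ QQ w T s + QQ w T (S - s) + 2*S^2*C^2 := by
    rintro s ⟨hs0, hsS⟩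
    have hii1 : ∀ a b : ℝ, IntervalIntegrable (fun s' => Ψ s s') volume a b :=
      intervalIntegrable_of_bdd (hΨm1 s)
        (fun s' => by rw [Real.norm_eq_abs]; exact hΨb s s')
    have hii2 : ∀ a b : ℝ, IntervalIntegrable (fun s' => Ψ s' s) volume a b :=
      intervalIntegrable_of_bdd (hΨm2 s)
        (fun s' => by rw [Real.norm_eq_abs]; exact hΨb s' s)
    have hq1 : ∀ a b : ℝ, IntervalIntegrable (fun s' => qset w T (s - s')) volume a b :=
      intervalIntegrable_of_bdd
        ((meas_qset hm T).comp_measurable (measurable_const.sub measurable_id))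
        (fun s' => by rw [Real.norm_eq_abs]; exact abs_qset_le hC hw hT.le _)
    have hq2 : ∀ a b : ℝ, IntervalIntegrable (fun s' => qset w T (s' - s)) volume a b :=
      intervalIntegrable_of_bdd
        ((meas_qset hm T).comp_measurable (measurable_id.sub measurable_const))
        (fun s' => by rw [Real.norm_eq_abs]; exact abs_qset_le hC hw hT.le _)
    rw [← integral_of_le hS.le,
      ← integral_add_adjacent_intervals (hii1 0 s) (hii1 s S)]
    have p1 : (∫ s' in (0:ℝ)..s, Ψ s s') ≤ QQ w T s + s*(2*S*C^2) := by
      have mono : (∫ s' in (0:ℝ)..s, Ψ s s')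
          ≤ ∫ s' in (0:ℝ)..s, (qset w T (s - s') + 2*S*C^2) := by
        apply integral_mono_on hs0 (hii1 0 s) ((hq1 0 s).add intervalIntegrable_const)
        rintro s' ⟨h0', h1'⟩
        have := psi_le hm hC hw hT.le h0' h1' (w := w)
        have h2 : 2*s'*C^2 ≤ 2*S*C^2 := by nlinarith
        have h3 : Ψ s s' ≤ qset w T (s - s') + 2*s'*C^2 := this
        linarith
      have e : ∫ s' in (0:ℝ)..s, (qset w T (s - s') + 2*S*C^2)
          = QQ w T s + s*(2*S*C^2) := by
        rw [intervalIntegral.integral_add (hq1 0 s) intervalIntegrable_const,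
          integral_comp_sub_left (qset w T) s, intervalIntegral.integral_const,
          smul_eq_mul, sub_self, sub_zero]
        rfl
      linarith [mono, e.le, e.ge]
    have p2 : (∫ s' in s..S, Ψ s s') ≤ QQ w T (S - s) + (S - s)*(2*S*C^2) := by
      have esym : (∫ s' in s..S, Ψ s s') = ∫ s' in s..S, Ψ s' s :=
        intervalIntegral.integral_congr (fun s' _ => hΨsymm s s')
      rw [esym]
      have mono : (∫ s' in s..S, Ψ s' s)
          ≤ ∫ s' in s..S, (qset w T (s' - s) + 2*S*C^2) := by
        apply integral_mono_on hsS (hii2 s S) ((hq2 s S).add intervalIntegrable_const)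
        rintro s' ⟨h0', h1'⟩
        have h3 : Ψ s' s ≤ qset w T (s' - s) + 2*s*C^2 := psi_le hm hC hw hT.le hs0 h0'
        have h2 : 2*s*C^2 ≤ 2*S*C^2 := by nlinarith
        linarith
      have e : ∫ s' in s..S, (qset w T (s' - s) + 2*S*C^2)
          = QQ w T (S - s) + (S - s)*(2*S*C^2) := by
        rw [intervalIntegral.integral_add (hq2 s S) intervalIntegrable_const,
          integral_comp_sub_right (qset w T) s, intervalIntegral.integral_const,
          smul_eq_mul, sub_self]
        rfl
      linarith [mono, e.le]
    have hsplit : s*(2*S*C^2) + (S - s)*(2*S*C^2) = 2*S^2*C^2 := by ring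
    linarith [p1, p2]
  -- outer integration
  have houter : (∫ s in Ioc (0:ℝ) S, ∫ s' in Ioc (0:ℝ) S, Ψ s s')
      ≤ 2*J + 2*S^3*C^2 := by
    have hmrow : StronglyMeasurable (fun s => ∫ s' in Ioc (0:ℝ) S, Ψ s s') := by
      have hmΨ : StronglyMeasurable (fun p : ℝ × ℝ => Ψ p.1 p.2) := by
        apply StronglyMeasurable.integral_prod_right'
          (f := fun q : (ℝ × ℝ) × ℝ => ⟪w (q.2+q.1.1), w (q.2+q.1.2)⟫)
        exact (hm.comp_measurable (measurable_snd.add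
            (measurable_fst.comp measurable_fst))).inner
          (hm.comp_measurable (measurable_snd.add (measurable_snd.comp measurable_fst)))
      exact hmΨ.integral_prod_right'
    have hii : IntervalIntegrable (fun s => ∫ s' in Ioc (0:ℝ) S, Ψ s s') volume 0 S := by
      apply intervalIntegrable_of_bdd hmrow (C := C^2*T*S)
      intro s
      exact norm_setInt_le hS.le _
        (fun s' => by rw [Real.norm_eq_abs]; exact hΨb s s')
    have hcQ : Continuous (QQ w T) := cont_QQ hm hC hw hT.le
    have hii2' : IntervalIntegrable
        (fun s => QQ w T s + QQ w T (S - s) + 2*S^2*C^2) volume 0 S :=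
      ((hcQ.add (hcQ.comp (continuous_const.sub continuous_id))).add
        continuous_const).intervalIntegrable _ _
    have mono : (∫ s in (0:ℝ)..S, ∫ s' in Ioc (0:ℝ) S, Ψ s s')
        ≤ ∫ s in (0:ℝ)..S, (QQ w T s + QQ w T (S - s) + 2*S^2*C^2) :=
      integral_mono_on hS.le hii hii2' hrow
    have e : ∫ s in (0:ℝ)..S, (QQ w T s + QQ w T (S - s) + 2*S^2*C^2)
        = 2*J + 2*S^3*C^2 := by
      have c1 : IntervalIntegrable (QQ w T) volume 0 S := hcQ.intervalIntegrable _ _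
      have c2 : IntervalIntegrable (fun s => QQ w T (S - s)) volume 0 S :=
        (hcQ.comp (continuous_const.sub continuous_id)).intervalIntegrable _ _
      rw [intervalIntegral.integral_add (c1.add c2) intervalIntegrable_const,
        intervalIntegral.integral_add c1 c2,
        integral_comp_sub_left (QQ w T) S, intervalIntegral.integral_const,
        smul_eq_mul]
      simp only [sub_self, sub_zero]
      rw [← hJ]
      ring
    rw [← integral_of_le hS.le]
    linarith [mono, e.le]
  -- put the pieces together
  have hB2 : ‖B‖^2 ≤ T*(2*J + 2*S^3*C^2) := by
    have := hvar
    rw [hdouble] at this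
    exact this.trans (mul_le_mul_of_nonneg_left houter hT.le)
  have hBn : ‖B‖ ≤ C*S*T := by
    have := norm_setInt_le hT.le v hvb
    calc ‖B‖ ≤ (C*S)*T := this
    _ = C*S*T := by ring
  clear_value J A B
  have hAn : ‖A‖ ≤ (1/S)*‖B‖ + 2*S*C := by
    have h1 : ‖S • A‖ - ‖B‖ ≤ 2*S^2*C := le_trans (norm_sub_norm_le _ _) hAB
    have h2 : ‖S • A‖ = S*‖A‖ := by
      rw [norm_smul, Real.norm_eq_abs, abs_of_pos hS]
    have h3 : S*‖A‖ ≤ ‖B‖ + 2*S^2*C := by linarith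
    have h4 := mul_le_mul_of_nonneg_left h3 (le_of_lt (by positivity : (0:ℝ) < 1/S))
    have hSne : S ≠ 0 := ne_of_gt hS
    calc ‖A‖ = (1/S)*(S*‖A‖) := by
          rw [← mul_assoc, one_div, inv_mul_cancel₀ hSne, one_mul]
    _ ≤ (1/S)*(‖B‖ + 2*S^2*C) := h4
    _ = (1/S)*‖B‖ + 2*S*C := by
          rw [mul_add]
          congr 1
          rw [show (1/S)*(2*S^2*C) = ((1/S)*S)*(2*S*C) by ring, one_div,
            inv_mul_cancel₀ hSne, one_mul]
  -- final numeric assembly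
  have hns : ‖(1/T) • A‖ = (1/T)*‖A‖ := by
    rw [norm_smul, Real.norm_eq_abs, abs_of_pos (by positivity : (0:ℝ) < 1/T)]
  rw [hns]
  set b : ℝ := ‖B‖ with hb
  have hb0 : 0 ≤ b := norm_nonneg _
  have hA0 : 0 ≤ ‖A‖ := norm_nonneg _
  have step1 : ((1/T)*‖A‖)^2 ≤ ((1/T)*((1/S)*b + 2*S*C))^2 := by
    apply pow_le_pow_left₀ (by positivity)
    apply mul_le_mul_of_nonneg_left hAn (by positivity)
  have key : (b + 2*S^2*C)^2 ≤ 2*J*T + 6*S^3*C^2*T + 4*S^4*C^2 := by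
    have h4 : (4*S^2*C)*b ≤ (4*S^2*C)*(C*S*T) :=
      mul_le_mul_of_nonneg_left hBn (by positivity)
    nlinarith [hB2, h4]
  have e1 : ((1/T)*((1/S)*b + 2*S*C))^2 = (b + 2*S^2*C)^2/(S^2*T^2) := by
    field_simp
  have e2 : (2*J*T + 6*S^3*C^2*T + 4*S^4*C^2)/(S^2*T^2)
      = (2/(S^2*T))*J + 6*S*C^2/T + (2*S*C/T)^2 := by
    field_simp
    ring
  calc ((1/T)*‖A‖)^2 ≤ ((1/T)*((1/S)*b + 2*S*C))^2 := step1
  _ = (b + 2*S^2*C)^2/(S^2*T^2) := e1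
  _ ≤ (2*J*T + 6*S^3*C^2*T + 4*S^4*C^2)/(S^2*T^2) := by gcongr
  _ = (2/(S^2*T))*J + 6*S*C^2/T + (2*S*C/T)^2 := e2

set_option maxHeartbeats 1000000 in
lemma grid_bound {w : ℝ → ℌ} {C : ℝ} (hm : StronglyMeasurable w) (hC : 0 ≤ C)
    (hw : ∀ t, ‖w t‖ ≤ C) {T : ℝ} (hT : 0 < T) {S₀ : ℝ} (hS₀ : 1 ≤ S₀) (N : ℕ)
    {ε : ℝ} (hε0 : 0 ≤ ε)
    (hε : ∀ i : ℕ, i < N → QQ w T (S₀ + i) ≤ (S₀ + N)*T*ε) :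
    (∫ σ in (0:ℝ)..(S₀ + N), QQ w T σ)
      ≤ T*(S₀^2*C^2 + (S₀ + N)^2*ε + (S₀ + N)*C^2) := by
  have hcQ : Continuous (QQ w T) := cont_QQ hm hC hw hT.le
  have hQi : ∀ a b : ℝ, IntervalIntegrable (QQ w T) volume a b :=
    fun a b => hcQ.intervalIntegrable a b
  have hqii : ∀ a b : ℝ, IntervalIntegrable (qset w T) volume a b :=
    qset_intervalIntegrable hm hC hw hT.le
  have hsplit : (∫ σ in (0:ℝ)..(S₀ + N), QQ w T σ)
      = (∫ σ in (0:ℝ)..S₀, QQ w T σ) + ∫ σ in S₀..(S₀ + N), QQ w T σ :=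
    (integral_add_adjacent_intervals (hQi 0 S₀) (hQi S₀ (S₀ + N))).symm
  have part1 : (∫ σ in (0:ℝ)..S₀, QQ w T σ) ≤ C^2*T*S₀*S₀ := by
    have hb : ∀ x ∈ Set.uIoc (0:ℝ) S₀, ‖QQ w T x‖ ≤ C^2*T*S₀ := by
      intro x hx
      rw [uIoc_of_le (by linarith : (0:ℝ) ≤ S₀)] at hx
      rw [Real.norm_eq_abs]
      calc |QQ w T x| ≤ C^2*T*x := abs_QQ_le hC hw hT.le hx.1.le
      _ ≤ C^2*T*S₀ := mul_le_mul_of_nonneg_left hx.2 (by positivity)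
    have h := intervalIntegral.norm_integral_le_of_norm_le_const hb
    rw [sub_zero, Real.norm_eq_abs, abs_of_nonneg (by linarith : (0:ℝ) ≤ S₀)] at h
    exact (le_abs_self _).trans h
  have hsum := intervalIntegral.sum_integral_adjacent_intervals
    (a := fun i : ℕ => S₀ + i) (μ := volume) (f := QQ w T) (n := N)
    (fun k _ => hQi _ _)
  simp only [Nat.cast_zero, add_zero] at hsum
  have heach : ∀ i ∈ Finset.range N,
      (∫ σ in (S₀ + (i:ℝ))..(S₀ + ((i:ℕ)+1:ℕ)), QQ w T σ) ≤ (S₀ + N)*T*ε + C^2*T := by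
    intro i hi
    have hiN : i < N := Finset.mem_range.mp hi
    have hle : S₀ + (i:ℝ) ≤ S₀ + ((i:ℕ)+1:ℕ) := by push_cast; linarith
    have hpt : ∀ σ ∈ Icc (S₀ + (i:ℝ)) (S₀ + ((i:ℕ)+1:ℕ)), QQ w T σ
        ≤ QQ w T (S₀ + i) + C^2*T := by
      rintro σ ⟨h1, h2⟩
      have hadj := integral_add_adjacent_intervals (hqii 0 (S₀ + i)) (hqii (S₀ + i) σ)
      have hbd : ‖∫ r in (S₀ + (i:ℝ))..σ, qset w T r‖ ≤ (C^2*T) * |σ - (S₀ + i)| :=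
        intervalIntegral.norm_integral_le_of_norm_le_const
          (fun r _ => by rw [Real.norm_eq_abs]; exact abs_qset_le hC hw hT.le r)
      have habs : |σ - (S₀ + (i:ℝ))| ≤ 1 := by
        rw [abs_of_nonneg (by linarith)]
        push_cast at h2
        linarith
      have h3 : (∫ r in (S₀ + (i:ℝ))..σ, qset w T r) ≤ C^2*T := by
        have h4 : (C^2*T) * |σ - (S₀ + (i:ℝ))| ≤ (C^2*T) * 1 :=
          mul_le_mul_of_nonneg_left habs (by positivity)
        have h6 : |∫ r in (S₀ + (i:ℝ))..σ, qset w T r| ≤ C^2*T := by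
          rw [← Real.norm_eq_abs]
          exact hbd.trans (by linarith [h4])
        linarith [(le_abs_self (∫ r in (S₀ + (i:ℝ))..σ, qset w T r)).trans h6]
      have hQdef : ∀ x : ℝ, QQ w T x = ∫ r in (0:ℝ)..x, qset w T r := fun _ => rfl
      rw [hQdef σ, hQdef (S₀ + i), ← hadj]
      linarith
    calc (∫ σ in (S₀ + (i:ℝ))..(S₀ + ((i:ℕ)+1:ℕ)), QQ w T σ)
        ≤ ∫ _σ in (S₀ + (i:ℝ))..(S₀ + ((i:ℕ)+1:ℕ)), (QQ w T (S₀ + i) + C^2*T) :=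
          integral_mono_on hle (hQi _ _) intervalIntegrable_const hpt
    _ = QQ w T (S₀ + i) + C^2*T := by
          rw [intervalIntegral.integral_const, smul_eq_mul,
            show (S₀ + ((i:ℕ)+1:ℕ) : ℝ) - (S₀ + i) = 1 by push_cast; ring, one_mul]
    _ ≤ (S₀ + N)*T*ε + C^2*T := by linarith [hε i hiN]
  have hsum_le : (∫ σ in S₀..(S₀ + (N:ℝ)), QQ w T σ) ≤ N*((S₀ + N)*T*ε + C^2*T) := by
    rw [← hsum]
    calc ∑ i ∈ Finset.range N, ∫ σ in (S₀ + (i:ℝ))..(S₀ + ((i:ℕ)+1:ℕ)), QQ w T σ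
        ≤ ∑ _i ∈ Finset.range N, ((S₀ + N)*T*ε + C^2*T) := Finset.sum_le_sum heach
    _ = N*((S₀ + N)*T*ε + C^2*T) := by
          rw [Finset.sum_const, Finset.card_range, nsmul_eq_mul]
  rw [hsplit]
  have hN : (N:ℝ) ≤ S₀ + N := by linarith
  have e1 : (N:ℝ)*((S₀ + N)*T*ε) ≤ (S₀ + N)*((S₀ + N)*T*ε) :=
    mul_le_mul_of_nonneg_right hN (by positivity)
  have e2 : (N:ℝ)*(C^2*T) ≤ (S₀ + N)*(C^2*T) :=
    mul_le_mul_of_nonneg_right hN (by positivity)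
  nlinarith [part1, hsum_le, e1, e2]

lemma hypval_le {w : ℝ → ℌ} {C : ℝ} (hC : 0 ≤ C) (hw : ∀ t, ‖w t‖ ≤ C)
    {σ T : ℝ} (hσ : 0 < σ) (hT : 0 < T) :
    |(1/σ) * ∫ s in (0:ℝ)..σ, ((1/T) * ∫ t in (0:ℝ)..T, ⟪w (t + s), w t⟫)| ≤ C^2 := by
  have hb : ∀ s ∈ Set.uIoc (0:ℝ) σ, ‖(1/T) * ∫ t in (0:ℝ)..T, ⟪w (t + s), w t⟫‖ ≤ C^2 := by
    intro s _
    rw [Real.norm_eq_abs, abs_mul, abs_of_pos (by positivity : (0:ℝ) < 1/T)]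
    have h2 : |∫ t in (0:ℝ)..T, ⟪w (t + s), w t⟫| ≤ C^2*T := by
      have := intervalIntegral.norm_integral_le_of_norm_le_const (a := (0:ℝ)) (b := T)
        (C := C^2) (f := fun t => ⟪w (t + s), w t⟫)
        (fun t _ => by rw [Real.norm_eq_abs]; exact inner_bdd hC hw _ _)
      rwa [sub_zero, Real.norm_eq_abs, abs_of_pos hT] at this
    calc (1/T) * |∫ t in (0:ℝ)..T, ⟪w (t + s), w t⟫| ≤ (1/T)*(C^2*T) :=
      mul_le_mul_of_nonneg_left h2 (by positivity)
    _ = C^2 := by field_simp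
  have h3 := intervalIntegral.norm_integral_le_of_norm_le_const hb
  rw [sub_zero, Real.norm_eq_abs, abs_of_pos hσ] at h3
  rw [abs_mul, abs_of_pos (by positivity : (0:ℝ) < 1/σ)]
  calc (1/σ) * |∫ s in (0:ℝ)..σ, ((1/T) * ∫ t in (0:ℝ)..T, ⟪w (t + s), w t⟫)|
      ≤ (1/σ)*(C^2*σ) := mul_le_mul_of_nonneg_left h3 (by positivity)
  _ = C^2 := by field_simp

set_option maxHeartbeats 1000000 in
lemma core_tendsto {w : ℝ → ℌ} {C : ℝ} (hm : StronglyMeasurable w) (hC : 0 ≤ C)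
    (hw : ∀ t, ‖w t‖ ≤ C)
    (hsc : ∀ ε : ℝ, 0 < ε → ∀ᶠ S in atTop, limsup (fun T : ℝ =>
      |(1/S) * ∫ s in (0:ℝ)..S, ((1/T) * ∫ t in (0:ℝ)..T, ⟪w (t + s), w t⟫)|) atTop < ε) :
    Tendsto (fun T : ℝ => (1/T) • ∫ t in (0:ℝ)..T, w t) atTop (nhds (0 : ℌ)) := by
  rw [NormedAddCommGroup.tendsto_nhds_zero]
  intro δ hδ
  set ε : ℝ := δ^2/32 with hε
  have hεpos : 0 < ε := by positivity
  -- a threshold S₀ beyond which all inner limsups are < ε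
  obtain ⟨S₀', hS₀'⟩ := eventually_atTop.mp (hsc ε hεpos)
  set S₀ : ℝ := max S₀' 1 with hS₀def
  have hS₀1 : 1 ≤ S₀ := le_max_right _ _
  have hls : ∀ σ : ℝ, S₀ ≤ σ → limsup (fun T : ℝ =>
      |(1/σ) * ∫ s in (0:ℝ)..σ, ((1/T) * ∫ t in (0:ℝ)..T, ⟪w (t + s), w t⟫)|) atTop < ε :=
    fun σ hσ => hS₀' σ ((le_max_left _ _).trans hσ)
  -- choose the number of grid points
  have hSn : Tendsto (fun n : ℕ => S₀ + (n:ℝ)) atTop atTop :=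
    tendsto_atTop_add_const_left _ _ tendsto_natCast_atTop_atTop
  have hlim : Tendsto (fun n : ℕ => 2*S₀^2*C^2/(S₀+(n:ℝ))^2 + 2*C^2/(S₀+(n:ℝ))) atTop
      (nhds 0) := by
    have l1 : Tendsto (fun n : ℕ => (S₀+(n:ℝ))^2) atTop atTop :=
      (tendsto_pow_atTop (two_ne_zero)).comp hSn
    have l2 : Tendsto (fun n : ℕ => 2*S₀^2*C^2/(S₀+(n:ℝ))^2) atTop (nhds 0) :=
      Tendsto.div_atTop tendsto_const_nhds l1
    have l3 : Tendsto (fun n : ℕ => 2*C^2/(S₀+(n:ℝ))) atTop (nhds 0) :=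
      Tendsto.div_atTop tendsto_const_nhds hSn
    simpa using l2.add l3
  obtain ⟨N, hN⟩ := eventually_atTop.mp
    ((hlim.eventually_lt_const (by positivity : (0:ℝ) < δ^2/16)).and (eventually_ge_atTop 1))
  obtain ⟨hNsmall, hN1⟩ := hN N le_rfl
  set S : ℝ := S₀ + (N:ℝ) with hSdef
  have hS1 : 1 ≤ S := by
    have : (0:ℝ) ≤ (N:ℝ) := Nat.cast_nonneg N
    linarith
  have hSpos : 0 < S := by linarith
  -- eventual smallness in T of each grid hypothesis
  have hev1 : ∀ i : ℕ, i < N → ∀ᶠ T : ℝ in atTop,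
      |(1/(S₀+(i:ℝ))) * ∫ s in (0:ℝ)..(S₀+(i:ℝ)),
        ((1/T) * ∫ t in (0:ℝ)..T, ⟪w (t + s), w t⟫)| < ε := by
    intro i _
    have hσi : S₀ ≤ S₀ + (i:ℝ) := by
      have : (0:ℝ) ≤ (i:ℝ) := Nat.cast_nonneg i
      linarith
    have hσpos : 0 < S₀ + (i:ℝ) := by linarith
    have hbound : IsBoundedUnder (· ≤ ·) atTop (fun T : ℝ =>
        |(1/(S₀+(i:ℝ))) * ∫ s in (0:ℝ)..(S₀+(i:ℝ)),
          ((1/T) * ∫ t in (0:ℝ)..T, ⟪w (t + s), w t⟫)|) := by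
      apply isBoundedUnder_of_eventually_le (a := C^2)
      filter_upwards [eventually_gt_atTop (0:ℝ)] with T hT
      exact hypval_le hC hw hσpos hT
    exact eventually_lt_of_limsup_lt (hls _ hσi) hbound
  have hevAll : ∀ᶠ T : ℝ in atTop, ∀ i ∈ Finset.range N,
      |(1/(S₀+(i:ℝ))) * ∫ s in (0:ℝ)..(S₀+(i:ℝ)),
        ((1/T) * ∫ t in (0:ℝ)..T, ⟪w (t + s), w t⟫)| < ε :=
    (eventually_all_finset _).mpr (fun i hi => hev1 i (Finset.mem_range.mp hi))
  -- eventual smallness of the T-error terms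
  have hevT1 : ∀ᶠ T : ℝ in atTop, 6*S*C^2/T < δ^2/16 :=
    (Tendsto.div_atTop tendsto_const_nhds tendsto_id).eventually_lt_const
      (by positivity : (0:ℝ) < δ^2/16)
  have hevT2 : ∀ᶠ T : ℝ in atTop, (2*S*C/T)^2 < δ^2/16 := by
    have h := Tendsto.div_atTop (f := fun _ : ℝ => 2*S*C) tendsto_const_nhds
      (tendsto_id (α := ℝ))
    have h2 : Tendsto (fun T : ℝ => (2*S*C/T)^2) atTop (nhds 0) := by
      have := h.pow 2
      simpa using this
    exact h2.eventually_lt_const (by positivity)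
  filter_upwards [hevAll, hevT1, hevT2, eventually_gt_atTop (0:ℝ)] with T hAll hT1 hT2 hTpos
  -- convert the grid hypotheses into bounds on QQ
  have hεQ : ∀ i : ℕ, i < N → QQ w T (S₀ + (i:ℝ)) ≤ S*T*ε := by
    intro i hi
    have hσpos : 0 < S₀ + (i:ℝ) := by
      have : (0:ℝ) ≤ (i:ℝ) := Nat.cast_nonneg i
      linarith
    have hval := hAll i (Finset.mem_range.mpr hi)
    have hQform : (∫ s in (0:ℝ)..(S₀+(i:ℝ)), ((1/T) * ∫ t in (0:ℝ)..T, ⟪w (t + s), w t⟫))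
        = (1/T) * QQ w T (S₀+(i:ℝ)) := by
      have e1 : ∀ s : ℝ, (∫ t in (0:ℝ)..T, ⟪w (t + s), w t⟫) = qset w T s :=
        fun s => integral_of_le hTpos.le
      simp_rw [e1]
      exact intervalIntegral.integral_const_mul _ _
    rw [hQform, abs_mul, abs_mul, abs_of_pos (by positivity : (0:ℝ) < 1/(S₀+(i:ℝ))),
      abs_of_pos (by positivity : (0:ℝ) < 1/T)] at hval
    have hσS : S₀ + (i:ℝ) ≤ S := by
      have : (i:ℝ) ≤ (N:ℝ) := by exact_mod_cast hi.le
      simp only [hSdef]; linarith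
    have h6 : |QQ w T (S₀+(i:ℝ))| < (S₀+(i:ℝ))*T*ε := by
      have hprod : 0 < (S₀+(i:ℝ))*T := by positivity
      have hmul := mul_lt_mul_of_pos_left hval hprod
      have heq : ((S₀+(i:ℝ))*T)*((1/(S₀+(i:ℝ)))*((1/T)*|QQ w T (S₀+(i:ℝ))|))
          = |QQ w T (S₀+(i:ℝ))| := by
        field_simp
      rw [heq] at hmul
      exact hmul
    have h7 : (S₀+(i:ℝ))*T*ε ≤ S*T*ε :=
      mul_le_mul_of_nonneg_right
        (mul_le_mul_of_nonneg_right hσS hTpos.le) hεpos.le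
    calc QQ w T (S₀+(i:ℝ)) ≤ |QQ w T (S₀+(i:ℝ))| := le_abs_self _
    _ ≤ (S₀+(i:ℝ))*T*ε := h6.le
    _ ≤ S*T*ε := h7
  -- apply the two main estimates
  have hgrid := grid_bound hm hC hw hTpos hS₀1 N hεpos.le hεQ
  have hsq := sq_avg_le hm hC hw hSpos hTpos (w := w) (T := T)
  have hmain : (2/(S^2*T)) * (∫ σ in (0:ℝ)..S, QQ w T σ)
      ≤ 2*S₀^2*C^2/S^2 + 2*ε + 2*C^2/S := by
    have hfac : (0:ℝ) < 2/(S^2*T) := by positivity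
    have := mul_le_mul_of_nonneg_left hgrid hfac.le
    have e3 : (2/(S^2*T))*(T*(S₀^2*C^2 + S^2*ε + S*C^2))
        = 2*S₀^2*C^2/S^2 + 2*ε + 2*C^2/S := by
      field_simp
    calc (2/(S^2*T)) * (∫ σ in (0:ℝ)..S, QQ w T σ)
        ≤ (2/(S^2*T))*(T*(S₀^2*C^2 + S^2*ε + S*C^2)) := this
    _ = 2*S₀^2*C^2/S^2 + 2*ε + 2*C^2/S := e3
  have hfinal : ‖(1/T) • ∫ t in (0:ℝ)..T, w t‖^2 ≤ δ^2/4 := by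
    have h2ε : 2*ε = δ^2/16 := by rw [hε]; ring
    calc ‖(1/T) • ∫ t in (0:ℝ)..T, w t‖^2
        ≤ (2/(S^2*T)) * (∫ σ in (0:ℝ)..S, QQ w T σ) + 6*S*C^2/T + (2*S*C/T)^2 := hsq
    _ ≤ (2*S₀^2*C^2/S^2 + 2*ε + 2*C^2/S) + 6*S*C^2/T + (2*S*C/T)^2 := by linarith
    _ ≤ δ^2/4 := by linarith [hNsmall, hT1, hT2]
  have hnn : 0 ≤ ‖(1/T) • ∫ t in (0:ℝ)..T, w t‖ := norm_nonneg _
  nlinarith [hfinal, hnn, hδ]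

end core

/-- **Continuous-time van der Corput estimate.**
If `u : [0,∞) → ℌ` is a bounded strongly measurable map into a real Hilbert space and the
iterated limit (as `T → ∞` and then `S → ∞`) of the absolute values of the double averages
`(1/S)∫₀^S (1/T)∫₀^T ⟪u(t+s), u(t)⟫ dt ds` is zero, then the vector-valued averages
`(1/T)∫₀^T u(t) dt` converge to `0` in norm. -/
theorem continuous_time_van_der_corput
    {ℌ : Type*} [NormedAddCommGroup ℌ] [InnerProductSpace ℝ ℌ] [CompleteSpace ℌ]
    (u : ℝ → ℌ) (hmeas : StronglyMeasurable u)
    (hbdd : ∃ C : ℝ, ∀ t : ℝ, 0 ≤ t → ‖u t‖ ≤ C)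
    (hscalar :
      limsup (fun S : ℝ =>
        limsup (fun T : ℝ =>
            |(1 / S) * ∫ s in (0:ℝ)..S, ((1 / T) * ∫ t in (0:ℝ)..T,
                (inner ℝ (u (t + s)) (u t) : ℝ))|) atTop) atTop = 0) :
    Tendsto (fun T : ℝ => (1 / T) • ∫ t in (0:ℝ)..T, u t) atTop (nhds (0 : ℌ)) := by
  obtain ⟨C₀, hbd⟩ := hbdd
  set C : ℝ := max C₀ 0 with hCdef
  have hC : 0 ≤ C := le_max_right _ _
  set w : ℝ → ℌ := fun t => if 0 ≤ t then u t else 0 with hwdef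
  have hmw : StronglyMeasurable w :=
    StronglyMeasurable.ite (measurableSet_Ici (a := (0:ℝ))) hmeas stronglyMeasurable_const
  have hwb : ∀ t, ‖w t‖ ≤ C := by
    intro t
    by_cases h : 0 ≤ t
    · simp only [hwdef, if_pos h]
      exact (hbd t h).trans (le_max_left _ _)
    · simp only [hwdef, if_neg h, norm_zero]
      exact hC
  have hweq : ∀ t : ℝ, 0 ≤ t → w t = u t := fun t h => by simp [hwdef, if_pos h]
  -- transfer the scalar hypothesis
  have hinner_eq : ∀ S : ℝ, 0 ≤ S → ∀ T : ℝ, 0 ≤ T →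
      |(1 / S) * ∫ s in (0:ℝ)..S, ((1 / T) * ∫ t in (0:ℝ)..T, ⟪u (t + s), u t⟫)|
      = |(1 / S) * ∫ s in (0:ℝ)..S, ((1 / T) * ∫ t in (0:ℝ)..T, ⟪w (t + s), w t⟫)| := by
    intro S hS T hT
    congr 2
    apply intervalIntegral.integral_congr
    intro s hs
    rw [Set.uIcc_of_le hS] at hs
    show (1 / T * ∫ t in (0:ℝ)..T, ⟪u (t + s), u t⟫)
        = 1 / T * ∫ t in (0:ℝ)..T, ⟪w (t + s), w t⟫
    congr 1
    apply intervalIntegral.integral_congr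
    intro t ht
    rw [Set.uIcc_of_le hT] at ht
    show (⟪u (t + s), u t⟫ : ℝ) = ⟪w (t + s), w t⟫
    rw [hweq t ht.1, hweq (t + s) (by linarith [ht.1, hs.1])]
  have houterq : ∀ᶠ S : ℝ in atTop,
      limsup (fun T : ℝ =>
        |(1 / S) * ∫ s in (0:ℝ)..S, ((1 / T) * ∫ t in (0:ℝ)..T, ⟪u (t + s), u t⟫)|) atTop
      = limsup (fun T : ℝ =>
        |(1 / S) * ∫ s in (0:ℝ)..S, ((1 / T) * ∫ t in (0:ℝ)..T, ⟪w (t + s), w t⟫)|) atTop := by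
    filter_upwards [eventually_ge_atTop (0:ℝ)] with S hS
    apply limsup_congr
    filter_upwards [eventually_ge_atTop (0:ℝ)] with T hT
    exact hinner_eq S hS T hT
  have hscal_w : limsup (fun S : ℝ =>
      limsup (fun T : ℝ =>
        |(1 / S) * ∫ s in (0:ℝ)..S, ((1 / T) * ∫ t in (0:ℝ)..T, ⟪w (t + s), w t⟫)|) atTop)
      atTop = 0 := by
    rw [← limsup_congr houterq]
    exact hscalar
  have hob : IsBoundedUnder (· ≤ ·) atTop (fun S : ℝ =>
      limsup (fun T : ℝ =>
        |(1 / S) * ∫ s in (0:ℝ)..S, ((1 / T) * ∫ t in (0:ℝ)..T, ⟪w (t + s), w t⟫)|) atTop) := by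
    apply isBoundedUnder_of_eventually_le (a := C^2)
    filter_upwards [eventually_gt_atTop (0:ℝ)] with S hS
    apply limsup_le_of_le
    · exact IsCoboundedUnder.of_frequently_ge
        (Frequently.of_forall (fun T => abs_nonneg _))
    · filter_upwards [eventually_gt_atTop (0:ℝ)] with T hT
      exact hypval_le hC hwb hS hT
  have hsc_w : ∀ ε : ℝ, 0 < ε → ∀ᶠ S : ℝ in atTop,
      limsup (fun T : ℝ =>
        |(1 / S) * ∫ s in (0:ℝ)..S, ((1 / T) * ∫ t in (0:ℝ)..T, ⟪w (t + s), w t⟫)|) atTop < ε := by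
    intro ε hε
    apply eventually_lt_of_limsup_lt _ hob
    rw [hscal_w]
    exact hε
  have htend := core_tendsto hmw hC hwb hsc_w
  apply htend.congr'
  filter_upwards [eventually_ge_atTop (0:ℝ)] with T hT
  congr 1
  apply intervalIntegral.integral_congr
  intro t ht
  rw [Set.uIcc_of_le hT] at ht
  show w t = u t
  exact hweq t ht.1
end
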